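/- arXiv:0708.2895 — 6 statements merged into one kernel-verified Lean document; each statement's English description precedes it below -/
import Mathlib

section
/- Let α be a complex random variable with E|α|² < ∞ and Var(α) > 0. Then there exist a real number θ and a real number κ ≥ 1 such that the random variable e^{√−1·θ}·α has κ-controlled second moment. -/
open MeasureTheory ProbabilityTheory Filter

noncomputable section

/-- The operator (spectral) norm of an `n × n` complex matrix, i.e. the supremum of `‖M v‖`
over unit vectors `v` in Euclidean space. -/
def opNorm {n : ℕ} (M : Matrix (Fin n) (Fin n) ℂ) : ℝ :=
  ‖(Matrix.toEuclideanCLM (𝕜 := ℂ) M : EuclideanSpace ℂ (Fin n) →L[ℂ] EuclideanSpace ℂ (Fin n))‖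

/-- The least singular value of an `n × n` complex matrix: `σ_n(M) = inf_{‖v‖ = 1} ‖M v‖`. -/
def sigmaMin {n : ℕ} (M : Matrix (Fin n) (Fin n) ℂ) : ℝ :=
  ⨅ v : {v : EuclideanSpace ℂ (Fin n) // ‖v‖ = 1},
    ‖Matrix.toEuclideanCLM (𝕜 := ℂ) M v.1‖

open Classical in
/-- The empirical spectral distribution of an `n × n` complex matrix:
`ESD M s t = (1/n) * #{eigenvalues λ (with multiplicity) : Re λ ≤ s, Im λ ≤ t}`,
eigenvalues with multiplicity being the roots of the characteristic polynomial. -/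
def ESD {n : ℕ} (M : Matrix (Fin n) (Fin n) ℂ) (s t : ℝ) : ℝ :=
  ((M.charpoly.roots.filter (fun z => z.re ≤ s ∧ z.im ≤ t)).card : ℝ) / n

/-- The distribution function of the uniform probability measure on the unit disk:
`μ_∞(s,t) = (1/π) · mes {z : |z| ≤ 1, Re z ≤ s, Im z ≤ t}`. -/
def unifDiskCDF (s t : ℝ) : ℝ :=
  (volume {z : ℂ | ‖z‖ ≤ 1 ∧ z.re ≤ s ∧ z.im ≤ t}).toReal / Real.pi

/-- The law (on `ℂ`) of a Bernoulli random variable which equals `1` with probability `ρ`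
and `0` with probability `1 - ρ`. -/
def bernoulliLawC (ρ : ℝ) : Measure ℂ :=
  ENNReal.ofReal ρ • Measure.dirac 1 + ENNReal.ofReal (1 - ρ) • Measure.dirac 0

/-- The law of `α · I_μ`, the product of a random variable with law `ν` and an independent
Bernoulli variable equal to `1` with probability `μ` and `0` otherwise. -/
def bernoulliMix (ν : Measure ℂ) (μ : ℝ) : Measure ℂ :=
  ENNReal.ofReal μ • ν + ENNReal.ofReal (1 - μ) • Measure.dirac 0

/-- The law of `α^{(μ)} := (α₁ - α₂) · I_{μ/2}` where `α₁, α₂` are i.i.d. with law `ν` and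
`I_{μ/2}` is an independent Bernoulli variable equal to `1` with probability `μ/2`. -/
def diffLaw (ν : Measure ℂ) (μ : ℝ) : Measure ℂ :=
  ENNReal.ofReal (μ / 2) • Measure.map (fun p : ℂ × ℂ => p.1 - p.2) (ν.prod ν)
    + ENNReal.ofReal (1 - μ / 2) • Measure.dirac 0

/-- The concentration probability `P_μ(v) := E exp(-π |W_{α^{(μ)}}(v)|²)`, where
`W_{α^{(μ)}}(v) = ∑ i, v i · x i` with `x i` i.i.d. copies of `α^{(μ)}` and `ν` is the law
of `α`. -/
def concProb {ι : Type*} [Fintype ι] (ν : Measure ℂ) (μ : ℝ) (v : ι → ℂ) : ℝ :=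
  ∫ x, Real.exp (-Real.pi * ‖∑ i, v i * x i‖ ^ 2) ∂(Measure.pi fun _ : ι => diffLaw ν μ)

/-- The small ball probability `p_{r,α}(v) := sup_z P(W_α(v) ∈ B(z,r))`, where
`W_α(v) = ∑ i, v i · x i` with `x i` i.i.d. copies of a random variable with law `ν`. -/
def smallBall {ι : Type*} [Fintype ι] (ν : Measure ℂ) (v : ι → ℂ) (r : ℝ) : ℝ :=
  ⨆ z : ℂ, ((Measure.pi fun _ : ι => ν) {x | dist (∑ i, v i * x i) z ≤ r}).toReal

/-- The characteristic function `f(z) := |E e(Re(α z))|²` where `e(t) = e^{2π√-1 t}` and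
`ν` is the law of `α`. -/
def charFn (ν : Measure ℂ) (z : ℂ) : ℝ :=
  ‖∫ w, Complex.exp (2 * Real.pi * Complex.I * ((w * z).re : ℂ)) ∂ν‖ ^ 2

/-- The `α`-norm `‖w‖_α := (E ‖Re(w (α₁ - α₂))‖_{ℝ/ℤ}²)^{1/2}` where `α₁, α₂` are i.i.d.
with law `ν`, and `‖t‖_{ℝ/ℤ} = |t - round t|` is the distance to the nearest integer. -/
def alphaNorm (ν : Measure ℂ) (w : ℂ) : ℝ :=
  Real.sqrt (∫ p : ℂ × ℂ,
    |(w * (p.1 - p.2)).re - (round ((w * (p.1 - p.2)).re) : ℝ)| ^ 2 ∂(ν.prod ν))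

/-- The symmetric generalized arithmetic progression with generators `v i` and dimensions
`L i`: the set of `∑ i, m i • v i` with `m i ∈ ℤ`, `|m i| ≤ L i`. -/
def GAPset {r : ℕ} (v : Fin r → ℂ) (L : Fin r → ℝ) : Set ℂ :=
  {z | ∃ m : Fin r → ℤ, (∀ i, |(m i : ℝ)| ≤ L i) ∧ z = ∑ i, (m i : ℂ) * v i}

/-- The dispersion `D(Q) := #Q / #(Q ∩ B(0,1))` of a finite set `Q ⊆ ℂ`. -/
def dispersion (Q : Set ℂ) : ℝ :=
  (Q.ncard : ℝ) / ((Q ∩ Metric.closedBall 0 1).ncard : ℝ)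

/-- A complex random variable `α` has `κ`-controlled second moment if `κ ≥ 1`,
`E|α|² ≤ κ`, and `E[(Re(zα - w))² 1_{|α| ≤ κ}] ≥ Re(z)²/κ` for all `z w : ℂ`. -/
def HasControlledSecondMoment {Ω : Type*} [MeasureSpace Ω] (α : Ω → ℂ) (κ : ℝ) : Prop :=
  1 ≤ κ ∧ Integrable (fun ω => ‖α ω‖ ^ 2) ∧ (∫ ω, ‖α ω‖ ^ 2) ≤ κ ∧
    ∀ z w : ℂ, z.re ^ 2 / κ ≤ ∫ ω in {ω | ‖α ω‖ ≤ κ}, ((z * α ω - w).re) ^ 2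

end

private lemma aux_integrable {Ω : Type*} [MeasureSpace Ω] [IsProbabilityMeasure (ℙ : Measure Ω)]
    {β : Ω → ℂ} (hβ : Measurable β)
    (hβint : Integrable (fun ω => ‖β ω‖ ^ 2)) (b c : ℝ) :
    Integrable (fun ω => ((β ω).re - b * (β ω).im - c) ^ 2) := by
  have hm : Measurable fun ω => ((β ω).re - b * (β ω).im - c) ^ 2 := by fun_prop
  refine ((hβint.const_mul (3 * (1 + b ^ 2))).add (integrable_const (3 * c ^ 2))).mono'
    hm.aestronglyMeasurable ?_
  filter_upwards with ω
  simp only [Pi.add_apply]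
  rw [Real.norm_eq_abs, abs_of_nonneg (sq_nonneg _)]
  have h1 : ‖β ω‖ ^ 2 = (β ω).re ^ 2 + (β ω).im ^ 2 := by
    rw [Complex.sq_norm, Complex.normSq_apply]; ring
  rw [h1]
  nlinarith [sq_nonneg ((β ω).re + b * (β ω).im), sq_nonneg ((β ω).re - b * (β ω).im),
    sq_nonneg ((β ω).re + c), sq_nonneg ((β ω).re - c), sq_nonneg (b * (β ω).im + c),
    sq_nonneg (b * (β ω).im - c), sq_nonneg ((β ω).re), sq_nonneg ((β ω).im),
    sq_nonneg (b * (β ω).re), sq_nonneg (b * (β ω).im), sq_nonneg c]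

private lemma conclude {Ω : Type*} [MeasureSpace Ω] [IsProbabilityMeasure (ℙ : Measure Ω)]
    {β : Ω → ℂ} (hβ : Measurable β) (hβint : Integrable (fun ω => ‖β ω‖ ^ 2))
    {ι : Type} [Fintype ι] [Nonempty ι] (P : ι → ℂ) (r ρ : ℝ) (hρ : 0 < ρ) (hr : 0 < r)
    (hpos : ∀ i, 0 < ℙ {ω | dist (β ω) (P i) < r})
    (hsep : ∀ b c : ℝ, ∃ i, ∀ᵐ ω ∂(ℙ : Measure Ω),
      dist (β ω) (P i) < r → ρ ≤ |(β ω).re - b * (β ω).im - c|) :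
    ∃ δ κ₀ : ℝ, 0 < δ ∧ 0 ≤ κ₀ ∧ ∀ b c : ℝ,
      δ ≤ ∫ ω in {ω | ‖β ω‖ ≤ κ₀}, ((β ω).re - b * (β ω).im - c) ^ 2 := by
  classical
  have i₀ : ι := Classical.arbitrary ι
  set κ₀ : ℝ := (Finset.univ.sup' Finset.univ_nonempty fun i => ‖P i‖) + r with hκ₀def
  set m : ℝ := Finset.univ.inf' Finset.univ_nonempty
    (fun i => (ℙ {ω | dist (β ω) (P i) < r}).toReal) with hmdef
  have hm : 0 < m := by
    rw [hmdef, Finset.lt_inf'_iff]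
    exact fun i _ => ENNReal.toReal_pos (hpos i).ne' (measure_ne_top _ _)
  have hκ₀ : 0 ≤ κ₀ := by
    have h1 : ‖P i₀‖ ≤ Finset.univ.sup' Finset.univ_nonempty fun i => ‖P i‖ :=
      Finset.le_sup' (fun i => ‖P i‖) (Finset.mem_univ i₀)
    have := norm_nonneg (P i₀)
    rw [hκ₀def]; linarith
  refine ⟨ρ ^ 2 * m, κ₀, by positivity, hκ₀, ?_⟩
  intro b c
  obtain ⟨i, hi⟩ := hsep b c
  set A : Set Ω := {ω | dist (β ω) (P i) < r} with hAdef
  have hA : MeasurableSet A := measurableSet_lt (hβ.dist measurable_const) measurable_const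
  have hsub : A ⊆ {ω | ‖β ω‖ ≤ κ₀} := by
    intro ω hω
    have h1 : ‖β ω‖ - ‖P i‖ ≤ dist (β ω) (P i) := by
      rw [dist_eq_norm]; exact norm_sub_norm_le _ _
    have h2 : ‖P i‖ ≤ Finset.univ.sup' Finset.univ_nonempty fun i => ‖P i‖ :=
      Finset.le_sup' (fun i => ‖P i‖) (Finset.mem_univ i)
    have h3 : dist (β ω) (P i) < r := hω
    show ‖β ω‖ ≤ κ₀
    rw [hκ₀def]; linarith
  have hint : IntegrableOn (fun ω => ((β ω).re - b * (β ω).im - c) ^ 2) {ω | ‖β ω‖ ≤ κ₀} ℙ :=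
    (aux_integrable hβ hβint b c).integrableOn
  calc ρ ^ 2 * m ≤ ρ ^ 2 * (ℙ A).toReal := by
        have h4 : m ≤ (ℙ A).toReal :=
          Finset.inf'_le (fun i => (ℙ {ω | dist (β ω) (P i) < r}).toReal) (Finset.mem_univ i)
        exact mul_le_mul_of_nonneg_left h4 (sq_nonneg ρ)
    _ = ∫ _ω in A, ρ ^ 2 ∂ℙ := by rw [setIntegral_const, smul_eq_mul, measureReal_def]; ring
    _ ≤ ∫ ω in A, ((β ω).re - b * (β ω).im - c) ^ 2 ∂ℙ := by
        refine setIntegral_mono_ae_restrict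
          (integrableOn_const (measure_lt_top _ _).ne) (hint.mono_set hsub) ?_
        refine (ae_restrict_iff' hA).mpr ?_
        filter_upwards [hi] with ω h hmem
        have h5 : ρ ≤ |(β ω).re - b * (β ω).im - c| := h hmem
        calc ρ ^ 2 ≤ |(β ω).re - b * (β ω).im - c| ^ 2 := pow_le_pow_left₀ hρ.le h5 2
          _ = ((β ω).re - b * (β ω).im - c) ^ 2 := sq_abs _
    _ ≤ ∫ ω in {ω | ‖β ω‖ ≤ κ₀}, ((β ω).re - b * (β ω).im - c) ^ 2 ∂ℙ :=
        setIntegral_mono_set hint (Filter.Eventually.of_forall fun ω => sq_nonneg _)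
          (HasSubset.Subset.eventuallyLE hsub)

private lemma exists_rotation {Ω : Type*} [MeasureSpace Ω]
    [IsProbabilityMeasure (ℙ : Measure Ω)]
    (α : Ω → ℂ) (hmeas : Measurable α)
    (hvarint : Integrable (fun ω => ‖α ω‖ ^ 2))
    (hvar : 0 < ∫ ω, ‖α ω - ∫ ω', α ω'‖ ^ 2) :
    ∃ θ δ κ₀ : ℝ, 0 < δ ∧ 0 ≤ κ₀ ∧ ∀ b c : ℝ,
      δ ≤ ∫ ω in {ω | ‖Complex.exp ((θ : ℂ) * Complex.I) * α ω‖ ≤ κ₀},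
        ((Complex.exp ((θ : ℂ) * Complex.I) * α ω).re
          - b * (Complex.exp ((θ : ℂ) * Complex.I) * α ω).im - c) ^ 2 := by
  classical
  set ν : Measure ℂ := Measure.map α ℙ with hν
  haveI : IsProbabilityMeasure ν := Measure.isProbabilityMeasure_map hmeas.aemeasurable
  set S : Set ℂ := ν.everywherePosSubset Set.univ with hSdef
  have hSmeas : MeasurableSet S := MeasurableSet.univ.everywherePosSubset
  have hSae : S =ᵐ[ν] (Set.univ : Set ℂ) := Measure.everywherePosSubset_ae_eq MeasurableSet.univ
  have hcompl : ν Sᶜ = 0 := by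
    have h := (MeasureTheory.ae_eq_set.mp hSae).2
    rwa [show Set.univ \ S = Sᶜ from Set.compl_eq_univ_diff S ▸ rfl] at h
  have haes : ∀ᵐ ω ∂(ℙ : Measure Ω), α ω ∈ S := by
    have h : ℙ (α ⁻¹' Sᶜ) = 0 := by
      rw [hν] at hcompl; rwa [Measure.map_apply hmeas hSmeas.compl] at hcompl
    rw [ae_iff]; exact h
  have hballpos : ∀ p ∈ S, ∀ r : ℝ, 0 < r → 0 < ℙ {ω | dist (α ω) p < r} := by
    intro p hp r hr
    have h1 : 0 < ν (Metric.ball p r) := by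
      refine hp.2 _ ?_
      rw [nhdsWithin_univ]
      exact Metric.ball_mem_nhds _ hr
    have h2 : ℙ {ω | dist (α ω) p < r} = ν (Metric.ball p r) := by
      rw [hν, Measure.map_apply hmeas measurableSet_ball]; rfl
    rw [h2]; exact h1
  have hSne : S.Nonempty := by
    by_contra h
    rw [Set.not_nonempty_iff_eq_empty] at h
    rw [h, Set.compl_empty, measure_univ] at hcompl
    exact one_ne_zero hcompl
  have h2pts : ∃ p ∈ S, ∃ q ∈ S, p ≠ q := by
    by_contra h
    push_neg at h
    obtain ⟨p₀, hp₀⟩ := hSne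
    have hconst : ∀ᵐ ω ∂(ℙ : Measure Ω), α ω = p₀ := haes.mono fun ω hω => h _ hω _ hp₀
    have hEα : (∫ ω, α ω) = p₀ := by
      rw [integral_congr_ae hconst]
      simp [measure_univ]
    have hzero : (∫ ω, ‖α ω - ∫ ω', α ω'‖ ^ 2) = 0 := by
      rw [hEα]
      have h0 : (fun ω => ‖α ω - p₀‖ ^ 2) =ᵐ[(ℙ : Measure Ω)] fun _ => (0 : ℝ) :=
        hconst.mono fun ω hω => by simp [hω]
      rw [integral_congr_ae h0, integral_zero]
    rw [hzero] at hvar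
    exact lt_irrefl _ hvar
  by_cases hgen : ∃ p₁ ∈ S, ∃ p₂ ∈ S, ∃ p₃ ∈ S,
      p₁.re * (p₂.im - p₃.im) + p₂.re * (p₃.im - p₁.im) + p₃.re * (p₁.im - p₂.im) ≠ 0
  · -- generic case: three non-collinear support points, no rotation needed
    obtain ⟨p₁, hp₁, p₂, hp₂, p₃, hp₃, hD⟩ := hgen
    refine ⟨0, ?_⟩
    simp only [Complex.ofReal_zero, zero_mul, Complex.exp_zero, one_mul]
    set D : ℝ := p₁.re * (p₂.im - p₃.im) + p₂.re * (p₃.im - p₁.im) + p₃.re * (p₁.im - p₂.im)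
      with hDdef
    have hDpos : 0 < |D| := abs_pos.mpr hD
    set F : ℂ × ℂ × ℂ → ℝ := fun q =>
      q.1.re * (q.2.1.im - q.2.2.im) + q.2.1.re * (q.2.2.im - q.1.im)
        + q.2.2.re * (q.1.im - q.2.1.im) with hFdef
    set G : ℂ × ℂ × ℂ → ℝ := fun q =>
      |q.2.1.im - q.2.2.im| + |q.2.2.im - q.1.im| + |q.1.im - q.2.1.im| with hGdef
    have hFc : ContinuousAt F (p₁, p₂, p₃) := by rw [hFdef]; fun_prop
    have hGc : ContinuousAt G (p₁, p₂, p₃) := by rw [hGdef]; fun_prop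
    obtain ⟨r₁, hr₁, hF₁⟩ := Metric.continuousAt_iff.mp hFc (|D| / 2) (by positivity)
    obtain ⟨r₂, hr₂, hG₁⟩ := Metric.continuousAt_iff.mp hGc 1 one_pos
    set r : ℝ := min r₁ r₂ with hrdef
    have hr : 0 < r := lt_min hr₁ hr₂
    set L : ℝ := G (p₁, p₂, p₃) with hLdef
    have hL : 0 ≤ L := by rw [hLdef, hGdef]; positivity
    have hL1 : 0 < L + 1 := by linarith
    set ρ : ℝ := |D| / (4 * (L + 1)) with hρdef
    have hρ : 0 < ρ := by positivity
    have hFp : F (p₁, p₂, p₃) = D := rfl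
    have hrle1 : r ≤ r₁ := hrdef ▸ min_le_left r₁ r₂
    have hrle2 : r ≤ r₂ := hrdef ▸ min_le_right r₁ r₂
    clear_value D r L ρ
    refine conclude hmeas hvarint (ι := Fin 3) ![p₁, p₂, p₃] (r / 2) ρ hρ (by positivity) ?_ ?_
    · intro i
      fin_cases i
      · exact hballpos p₁ hp₁ _ (by positivity)
      · exact hballpos p₂ hp₂ _ (by positivity)
      · exact hballpos p₃ hp₃ _ (by positivity)
    · intro b c
      have det : ∃ i : Fin 3, ∀ z : ℂ, dist z (![p₁, p₂, p₃] i) < r / 2 →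
          ρ ≤ |z.re - b * z.im - c| := by
        by_contra hcon
        push_neg at hcon
        obtain ⟨z₁, hz₁d, hz₁f⟩ := hcon 0
        obtain ⟨z₂, hz₂d, hz₂f⟩ := hcon 1
        obtain ⟨z₃, hz₃d, hz₃f⟩ := hcon 2
        simp only [Matrix.cons_val_zero, Matrix.cons_val_one, Matrix.head_cons,
          Matrix.cons_val_two, Matrix.tail_cons] at hz₁d hz₂d hz₃d
        have hdist : dist ((z₁, z₂, z₃) : ℂ × ℂ × ℂ) (p₁, p₂, p₃) < r := by
          rw [Prod.dist_eq, Prod.dist_eq]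
          have hhalf : r / 2 < r := by linarith
          exact max_lt (hz₁d.trans hhalf) (max_lt (hz₂d.trans hhalf) (hz₃d.trans hhalf))
        have hF₂ : |F (z₁, z₂, z₃) - D| < |D| / 2 := by
          have := hF₁ (lt_of_lt_of_le hdist hrle1)
          rwa [Real.dist_eq, hFp] at this
        have hG₂ : G (z₁, z₂, z₃) < L + 1 := by
          have := hG₁ (lt_of_lt_of_le hdist hrle2)
          rw [Real.dist_eq] at this
          have := (abs_lt.mp this).2
          linarith
        have hid : F (z₁, z₂, z₃) =
            (z₂.im - z₃.im) * (z₁.re - b * z₁.im - c)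
              + (z₃.im - z₁.im) * (z₂.re - b * z₂.im - c)
              + (z₁.im - z₂.im) * (z₃.re - b * z₃.im - c) := by
          simp only [hFdef]; ring
        have hb1 : |F (z₁, z₂, z₃)| ≤ G (z₁, z₂, z₃) * ρ := by
          rw [hid]
          calc |(z₂.im - z₃.im) * (z₁.re - b * z₁.im - c)
                + (z₃.im - z₁.im) * (z₂.re - b * z₂.im - c)
                + (z₁.im - z₂.im) * (z₃.re - b * z₃.im - c)|
              ≤ |(z₂.im - z₃.im) * (z₁.re - b * z₁.im - c)|
                + |(z₃.im - z₁.im) * (z₂.re - b * z₂.im - c)|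
                + |(z₁.im - z₂.im) * (z₃.re - b * z₃.im - c)| := abs_add_three _ _ _
            _ ≤ |z₂.im - z₃.im| * ρ + |z₃.im - z₁.im| * ρ + |z₁.im - z₂.im| * ρ := by
                rw [abs_mul, abs_mul, abs_mul]
                gcongr <;> first
                  | exact hz₁f.le
                  | exact hz₂f.le
                  | exact hz₃f.le
            _ = G (z₁, z₂, z₃) * ρ := by simp only [hGdef]; ring
        have hb3 : |D| / 2 < |F (z₁, z₂, z₃)| := by
          have h7 := abs_sub_abs_le_abs_sub D (F (z₁, z₂, z₃))
          rw [abs_sub_comm] at h7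
          linarith
        have hb4 : (L + 1) * ρ = |D| / 4 := by
          rw [hρdef]; field_simp
        have hb5 : G (z₁, z₂, z₃) * ρ ≤ (L + 1) * ρ :=
          mul_le_mul_of_nonneg_right hG₂.le hρ.le
        linarith
      obtain ⟨i, hdet⟩ := det
      exact ⟨i, Filter.Eventually.of_forall fun ω h => hdet _ h⟩
  · -- degenerate case: support on a line, rotate to make it horizontal
    push_neg at hgen
    obtain ⟨p, hpS, q, hqS, hpq⟩ := h2pts
    set u : ℂ := q - p with hu
    have hu0 : u ≠ 0 := sub_ne_zero.mpr hpq.symm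
    have hnu : (0 : ℝ) < ‖u‖ := norm_pos_iff.mpr hu0
    have habs1 : ‖(‖u‖ : ℂ) / u‖ = 1 := by
      rw [norm_div, Complex.norm_real, norm_norm,
        div_self hnu.ne']
    obtain ⟨θ, hθ⟩ := (Complex.norm_eq_one_iff _).mp habs1
    refine ⟨θ, ?_⟩
    set e : ℂ := Complex.exp ((θ : ℂ) * Complex.I) with he
    have heu : e * u = (‖u‖ : ℂ) := by rw [hθ]; field_simp
    have heabs : ‖e‖ = 1 := by rw [hθ]; exact habs1
    have hnorm : ∀ z : ℂ, ‖e * z‖ = ‖z‖ := fun z => by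
      rw [norm_mul, heabs, one_mul]
    have him0 : e.re * u.im + e.im * u.re = 0 := by
      have h := congrArg Complex.im heu
      simpa [Complex.mul_im] using h
    have hline : ∀ s ∈ S, (e * s).im = (e * p).im := by
      intro s hs
      have h0 : p.re * (q.im - s.im) + q.re * (s.im - p.im) + s.re * (p.im - q.im) = 0 :=
        hgen p hpS q hqS s hs
      have hcross : u.re * (s - p).im - u.im * (s - p).re = 0 := by
        rw [hu]
        simp only [Complex.sub_re, Complex.sub_im]
        linear_combination h0
      have hcases : u.re ≠ 0 ∨ u.im ≠ 0 := by
        by_contra hc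
        push_neg at hc
        exact hu0 (Complex.ext hc.1 hc.2)
      have hkey : e.re * (s - p).im + e.im * (s - p).re = 0 := by
        rcases hcases with h | h
        · have hmul : (e.re * (s - p).im + e.im * (s - p).re) * u.re =
              e.re * (u.re * (s - p).im - u.im * (s - p).re)
                + (s - p).re * (e.re * u.im + e.im * u.re) := by ring
          rw [hcross, him0, mul_zero, mul_zero, add_zero] at hmul
          exact (mul_eq_zero.mp hmul).resolve_right h
        · have hmul : (e.re * (s - p).im + e.im * (s - p).re) * u.im =
              (s - p).im * (e.re * u.im + e.im * u.re)
                - e.im * (u.re * (s - p).im - u.im * (s - p).re) := by ring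
          rw [hcross, him0, mul_zero, mul_zero, sub_zero] at hmul
          exact (mul_eq_zero.mp hmul).resolve_right h
      have him : (e * (s - p)).im = 0 := by rw [Complex.mul_im]; linarith
      have hsplit : e * s = e * (s - p) + e * p := by ring
      rw [hsplit, Complex.add_im, him, zero_add]
    set y₀ : ℝ := (e * p).im with hy₀
    set ρ : ℝ := ‖u‖ / 4 with hρdef
    have hρ : 0 < ρ := by positivity
    have hqre : (e * q).re = (e * p).re + 4 * ρ := by
      have h : e * q - e * p = (‖u‖ : ℂ) := by rw [← heu, hu]; ring
      have h2 := congrArg Complex.re h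
      simp only [Complex.sub_re, Complex.ofReal_re] at h2
      rw [hρdef]; linarith
    have hβ : Measurable fun ω => e * α ω := hmeas.const_mul e
    have hβint : Integrable fun ω => ‖e * α ω‖ ^ 2 := by
      have h : (fun ω => ‖e * α ω‖ ^ 2) = fun ω => ‖α ω‖ ^ 2 := funext fun ω => by rw [hnorm]
      rw [h]; exact hvarint
    refine conclude (β := fun ω => e * α ω) hβ hβint (ι := Fin 2) ![e * p, e * q] ρ ρ hρ hρ ?_ ?_
    · intro i
      have hset : ∀ w : ℂ, {ω | dist (e * α ω) (e * w) < ρ} = {ω | dist (α ω) w < ρ} := by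
        intro w
        ext ω
        simp only [Set.mem_setOf_eq, dist_eq_norm]
        rw [show e * α ω - e * w = e * (α ω - w) by ring, hnorm]
      fin_cases i
      · exact (hset p).symm ▸ hballpos p hpS ρ hρ
      · exact (hset q).symm ▸ hballpos q hqS ρ hρ
    · intro b c
      set t : ℝ := b * y₀ + c with ht
      have step : ∀ z w : ℂ, 2 * ρ ≤ |w.re - t| → z.im = y₀ → dist z w < ρ →
          ρ ≤ |z.re - b * z.im - c| := by
        intro z w h2 hzim hd
        have h3 : |z.re - w.re| ≤ ‖z - w‖ := by
          have h := Complex.abs_re_le_norm (z - w)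
          rwa [Complex.sub_re] at h
        rw [dist_eq_norm] at hd
        have h4 : |w.re - t| ≤ |w.re - z.re| + |z.re - t| := abs_sub_le _ _ _
        have h5 : z.re - b * z.im - c = z.re - t := by rw [hzim, ht]; ring
        rw [h5]
        have h6 : |w.re - z.re| = |z.re - w.re| := abs_sub_comm _ _
        linarith
      rcases le_or_gt (2 * ρ) |(e * p).re - t| with hcase | hcase
      · refine ⟨0, ?_⟩
        filter_upwards [haes] with ω hωS hdist
        simp only [Matrix.cons_val_zero] at hdist
        exact step (e * α ω) (e * p) hcase (hline _ hωS) hdist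
      · refine ⟨1, ?_⟩
        have h2q : 2 * ρ ≤ |(e * q).re - t| := by
          have h7 : |(e * q).re - (e * p).re| ≤ |(e * q).re - t| + |t - (e * p).re| :=
            abs_sub_le _ _ _
          have h8 : |(e * q).re - (e * p).re| = 4 * ρ := by
            rw [show (e * q).re - (e * p).re = 4 * ρ by rw [hqre]; ring]
            exact abs_of_pos (by positivity)
          have h9 : |t - (e * p).re| = |(e * p).re - t| := abs_sub_comm _ _
          linarith
        filter_upwards [haes] with ω hωS hdist
        simp only [Matrix.cons_val_one, Matrix.head_cons] at hdist
        exact step (e * α ω) (e * q) h2q (hline _ hωS) hdist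

/-- Any complex random variable with finite non-zero variance has `κ`-controlled second
moment after a phase rotation. -/
theorem controlled_second_moment_after_rotation
    {Ω : Type*} [MeasureSpace Ω] [IsProbabilityMeasure (ℙ : Measure Ω)]
    (α : Ω → ℂ) (hmeas : Measurable α) (hint : Integrable α)
    (hvarint : Integrable (fun ω => ‖α ω‖ ^ 2))
    (hvar : 0 < ∫ ω, ‖α ω - ∫ ω', α ω'‖ ^ 2) :
    ∃ θ κ : ℝ, 1 ≤ κ ∧
      HasControlledSecondMoment (fun ω => Complex.exp ((θ : ℂ) * Complex.I) * α ω) κ := by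
  obtain ⟨θ, δ, κ₀, hδ, hκ₀, hmain⟩ := exists_rotation α hmeas hvarint hvar
  set e : ℂ := Complex.exp ((θ : ℂ) * Complex.I) with he
  have heabs : ‖e‖ = 1 := by rw [he]; exact Complex.norm_exp_ofReal_mul_I θ
  have hnorm : ∀ z : ℂ, ‖e * z‖ = ‖z‖ := fun z => by
    rw [norm_mul, heabs, one_mul]
  have hβ : Measurable fun ω => e * α ω := hmeas.const_mul e
  have hβint : Integrable fun ω => ‖e * α ω‖ ^ 2 := by
    have h : (fun ω => ‖e * α ω‖ ^ 2) = fun ω => ‖α ω‖ ^ 2 := funext fun ω => by rw [hnorm]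
    rw [h]; exact hvarint
  set κ : ℝ := max κ₀ (max (max 1 (∫ ω, ‖α ω‖ ^ 2)) (1 / δ)) with hκ
  have hκ1 : (1 : ℝ) ≤ κ := le_max_of_le_right (le_max_of_le_left (le_max_left _ _))
  have hκpos : (0 : ℝ) < κ := lt_of_lt_of_le one_pos hκ1
  have hκδ : 1 / κ ≤ δ := by
    have h1 : 1 / δ ≤ κ := le_max_of_le_right (le_max_right _ _)
    rw [div_le_iff₀ hκpos]
    calc (1 : ℝ) = δ * (1 / δ) := by field_simp
      _ ≤ δ * κ := mul_le_mul_of_nonneg_left h1 hδ.le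
  refine ⟨θ, κ, hκ1, hκ1, hβint, ?_, ?_⟩
  · have h : (∫ ω, ‖e * α ω‖ ^ 2) = ∫ ω, ‖α ω‖ ^ 2 := by
      congr 1; funext ω; rw [hnorm]
    rw [h]
    exact le_max_of_le_right (le_max_of_le_left (le_max_right _ _))
  · intro z w
    by_cases hz : z.re = 0
    · rw [hz]
      simp only [ne_eq, OfNat.ofNat_ne_zero, not_false_eq_true, zero_pow, zero_div]
      exact setIntegral_nonneg (measurableSet_le hβ.norm measurable_const)
        fun ω _ => sq_nonneg _
    · set b : ℝ := z.im / z.re with hb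
      set c : ℝ := w.re / z.re with hc
      have hfun : ∀ ω : Ω, ((z * (e * α ω) - w).re) ^ 2
          = z.re ^ 2 * ((e * α ω).re - b * (e * α ω).im - c) ^ 2 := by
        intro ω
        have h1 : (z * (e * α ω) - w).re = z.re * ((e * α ω).re - b * (e * α ω).im - c) := by
          rw [Complex.sub_re, Complex.mul_re, hb, hc]
          field_simp
        rw [h1, mul_pow]
      have hκ₀κ : κ₀ ≤ κ := by rw [hκ]; exact le_max_left _ _
      have hsub : {ω | ‖e * α ω‖ ≤ κ₀} ⊆ {ω | ‖e * α ω‖ ≤ κ} :=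
        fun ω h => le_trans h hκ₀κ
      have hmono : (∫ ω in {ω | ‖e * α ω‖ ≤ κ₀}, ((e * α ω).re - b * (e * α ω).im - c) ^ 2)
          ≤ ∫ ω in {ω | ‖e * α ω‖ ≤ κ}, ((e * α ω).re - b * (e * α ω).im - c) ^ 2 :=
        setIntegral_mono_set (aux_integrable hβ hβint b c).integrableOn
          (Filter.Eventually.of_forall fun ω => sq_nonneg _)
          (HasSubset.Subset.eventuallyLE hsub)
      calc z.re ^ 2 / κ = z.re ^ 2 * (1 / κ) := by ring
        _ ≤ z.re ^ 2 * δ := mul_le_mul_of_nonneg_left hκδ (sq_nonneg _)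
        _ ≤ z.re ^ 2 * ∫ ω in {ω | ‖e * α ω‖ ≤ κ₀},
              ((e * α ω).re - b * (e * α ω).im - c) ^ 2 :=
            mul_le_mul_of_nonneg_left (hmain b c) (sq_nonneg _)
        _ ≤ z.re ^ 2 * ∫ ω in {ω | ‖e * α ω‖ ≤ κ},
              ((e * α ω).re - b * (e * α ω).im - c) ^ 2 :=
            mul_le_mul_of_nonneg_left hmono (sq_nonneg _)
        _ = ∫ ω in {ω | ‖e * α ω‖ ≤ κ},
              z.re ^ 2 * ((e * α ω).re - b * (e * α ω).im - c) ^ 2 :=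
            (integral_const_mul _ _).symm
        _ = ∫ ω in {ω | ‖e * α ω‖ ≤ κ}, ((z * (e * α ω) - w).re) ^ 2 := by
            congr 1; funext ω; rw [hfun]
end

section
/- Let α be a complex random variable, let 0 < μ ≤ 1, and let v = (v₁,…,vₙ) be a tuple of complex numbers. Then P_μ(v) = ∫_ℂ ∏_{i=1}^{n} (1 − μ/2 + (μ/2)·f(ξv_i)) · exp(−π|ξ|²) dξ, where dξ is Lebesgue measure on ℂ. -/
open MeasureTheory ProbabilityTheory Filter

noncomputable section
open Complex

lemma gauss_pt (z : ℂ) :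
    ∫ ξ : ℂ, Complex.exp (2 * Real.pi * Complex.I * (((ξ * z).re : ℝ) : ℂ))
        * Complex.exp (-(Real.pi : ℂ) * (‖ξ‖ : ℂ) ^ 2)
      = Complex.exp (-(Real.pi : ℂ) * (‖z‖ : ℂ) ^ 2) := by
  have hb : (0:ℝ) < ((Real.pi : ℂ)).re := by simpa using Real.pi_pos
  have h := GaussianFourier.integral_cexp_neg_mul_sq_norm_add (V := ℂ) hb
      (2 * Real.pi * Complex.I) ((starRingEnd ℂ) z)
  have hinner : ∀ ξ : ℂ, (inner ℝ ((starRingEnd ℂ) z) ξ : ℝ) = (ξ * z).re := by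
    intro ξ
    simp [RCLike.inner_apply, Complex.mul_re]
  calc ∫ ξ : ℂ, Complex.exp (2*Real.pi*I*(((ξ*z).re : ℝ):ℂ)) * Complex.exp (-(Real.pi:ℂ)*(‖ξ‖:ℂ)^2)
      = ∫ ξ : ℂ, Complex.exp (-(Real.pi:ℂ)*(‖ξ‖:ℂ)^2
          + 2*Real.pi*I*((inner ℝ ((starRingEnd ℂ) z) ξ : ℝ):ℂ)) := by
        congr 1; funext ξ; rw [hinner, Complex.exp_add, mul_comm]
    _ = ((Real.pi:ℂ) / (Real.pi:ℂ)) ^ ((Module.finrank ℝ ℂ : ℂ) / 2)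
          * Complex.exp ((2*Real.pi*I)^2 * (‖(starRingEnd ℂ) z‖:ℂ)^2 / (4*(Real.pi:ℂ))) := h
    _ = Complex.exp (-(Real.pi:ℂ)*(‖z‖:ℂ)^2) := by
        rw [div_self (by exact_mod_cast Real.pi_ne_zero), one_cpow, one_mul, RCLike.norm_conj]
        congr 1
        rw [mul_pow, mul_pow, Complex.I_sq]
        have : (Real.pi : ℂ) ≠ 0 := by exact_mod_cast Real.pi_ne_zero
        field_simp
        ring

lemma norm_char_exp (r : ℝ) : ‖Complex.exp (2 * Real.pi * Complex.I * (r : ℂ))‖ = 1 := by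
  simp [Complex.norm_exp, Complex.mul_re]

lemma integrable_char {M : Measure ℂ} [IsFiniteMeasure M] (w : ℂ) :
    Integrable (fun y : ℂ => Complex.exp (2 * Real.pi * Complex.I * (((y * w).re : ℝ) : ℂ))) M := by
  have hc : Continuous fun y : ℂ => Complex.exp (2 * Real.pi * Complex.I * (((y * w).re : ℝ) : ℂ)) := by
    fun_prop
  refine (integrable_const (1:ℝ)).mono' hc.aestronglyMeasurable ?_
  filter_upwards with y
  rw [norm_char_exp]

lemma integral_char_diffLaw (ν : Measure ℂ) [IsProbabilityMeasure ν] {μ : ℝ}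
    (h0 : 0 ≤ μ) (h1 : μ ≤ 1) (w : ℂ) :
    ∫ y, Complex.exp (2 * Real.pi * Complex.I * (((y * w).re : ℝ) : ℂ)) ∂(diffLaw ν μ)
      = ((1 - μ / 2 + μ / 2 * charFn ν w : ℝ) : ℂ) := by
  haveI : IsProbabilityMeasure (Measure.map (fun p : ℂ × ℂ => p.1 - p.2) (ν.prod ν)) :=
    Measure.isProbabilityMeasure_map (measurable_fst.sub measurable_snd).aemeasurable
  set g : ℂ → ℂ := fun y => Complex.exp (2 * Real.pi * Complex.I * (((y * w).re : ℝ) : ℂ)) with hg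
  have h2 : (0:ℝ) ≤ μ / 2 := by linarith
  have h3 : (0:ℝ) ≤ 1 - μ / 2 := by linarith
  rw [diffLaw, integral_add_measure, integral_smul_measure, integral_smul_measure,
    integral_dirac, integral_map (φ := fun p : ℂ × ℂ => p.1 - p.2) (measurable_fst.sub measurable_snd).aemeasurable]
  · have key : ∫ p : ℂ × ℂ, g (p.1 - p.2) ∂(ν.prod ν)
        = ((charFn ν w : ℝ) : ℂ) := by
      have hsplit : ∀ p : ℂ × ℂ, g (p.1 - p.2) = g p.1 * (starRingEnd ℂ) (g p.2) := by
        intro p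
        simp only [hg, ← Complex.exp_conj, ← Complex.exp_add]
        congr 1
        simp only [map_mul, Complex.conj_I, Complex.conj_ofReal, map_ofNat]
        rw [sub_mul, Complex.sub_re, Complex.ofReal_sub]
        push_cast
        ring
      simp_rw [hsplit]
      rw [integral_prod_mul (f := g) (g := fun y => (starRingEnd ℂ) (g y)),
        integral_conj, Complex.mul_conj']
      rw [charFn]
      push_cast
      ring
    rw [key, ENNReal.toReal_ofReal h2, ENNReal.toReal_ofReal h3]
    simp only [zero_mul, Complex.zero_re, Complex.ofReal_zero, mul_zero, Complex.exp_zero,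
      Complex.real_smul, mul_one]
    push_cast
    ring
  · exact (integrable_char w).aestronglyMeasurable
  · haveI : IsFiniteMeasure (ENNReal.ofReal (μ / 2) •
        Measure.map (fun p : ℂ × ℂ => p.1 - p.2) (ν.prod ν)) := by
      refine ⟨?_⟩
      rw [Measure.smul_apply, measure_univ, smul_eq_mul, mul_one]
      exact ENNReal.ofReal_lt_top
    exact integrable_char w
  · haveI : IsFiniteMeasure (ENNReal.ofReal (1 - μ / 2) • (Measure.dirac (0:ℂ))) := by
      refine ⟨?_⟩
      rw [Measure.smul_apply, measure_univ, smul_eq_mul, mul_one]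
      exact ENNReal.ofReal_lt_top
    exact integrable_char w

lemma integral_pi_prod {ι : Type*} [Fintype ι] (m : Measure ℂ) [SigmaFinite m]
    (f : ι → ℂ → ℂ) :
    ∫ x : ι → ℂ, ∏ i, f i (x i) ∂(Measure.pi fun _ => m) = ∏ i, ∫ y, f i y ∂m := by
  letI : MeasureSpace ℂ := ⟨m⟩
  exact MeasureTheory.integral_fintype_prod_eq_prod f (μ := fun _ => m)

end

/-- **Fourier representation of the concentration probability** (Lemma 4.2). -/
theorem concProb_fourier_representation
    {Ω : Type*} [MeasureSpace Ω] [IsProbabilityMeasure (ℙ : Measure Ω)]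
    (α : Ω → ℂ) (hmeas : Measurable α)
    (μ : ℝ) (hμ : 0 < μ) (hμ1 : μ ≤ 1)
    (n : ℕ) (v : Fin n → ℂ) :
    concProb (Measure.map α ℙ) μ v =
      ∫ ξ : ℂ, (∏ i, (1 - μ / 2 + μ / 2 * charFn (Measure.map α ℙ) (ξ * v i)))
        * Real.exp (-Real.pi * ‖ξ‖ ^ 2) := by

  have hb : (0:ℝ) < ((Real.pi : ℂ)).re := by simpa using Real.pi_pos
  set ν := Measure.map α ℙ with hν
  haveI : IsProbabilityMeasure ν := Measure.isProbabilityMeasure_map hmeas.aemeasurable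
  haveI : IsProbabilityMeasure (Measure.map (fun p : ℂ × ℂ => p.1 - p.2) (ν.prod ν)) :=
    Measure.isProbabilityMeasure_map (measurable_fst.sub measurable_snd).aemeasurable
  haveI hdP : IsProbabilityMeasure (diffLaw ν μ) := by
    constructor
    rw [diffLaw, Measure.add_apply, Measure.smul_apply, Measure.smul_apply, measure_univ,
      measure_univ, smul_eq_mul, smul_eq_mul, mul_one, mul_one,
      ← ENNReal.ofReal_add (by linarith) (by linarith)]
    norm_num
  set P : Measure (Fin n → ℂ) := Measure.pi fun _ => diffLaw ν μ with hPdef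
  haveI : IsProbabilityMeasure P := by rw [hPdef]; infer_instance
  -- integrability of the Gaussian factor
  have hg : Integrable (fun ξ : ℂ => Complex.exp (-(Real.pi:ℂ) * (‖ξ‖:ℂ)^2)) volume := by
    simpa using GaussianFourier.integrable_cexp_neg_mul_sq_norm_add (V := ℂ) hb 0 0
  have hmap : Measure.map Prod.snd (P.prod (volume : Measure ℂ)) = volume := by
    rw [Measure.map_snd_prod, measure_univ, one_smul]
  have hg' : Integrable (fun ξ : ℂ => Complex.exp (-(Real.pi:ℂ) * (‖ξ‖:ℂ)^2))
      (Measure.map Prod.snd (P.prod (volume : Measure ℂ))) := by rw [hmap]; exact hg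
  have hg2 : Integrable (fun p : (Fin n → ℂ) × ℂ => Complex.exp (-(Real.pi:ℂ) * (‖p.2‖:ℂ)^2))
      (P.prod volume) := by
    have h1 := (integrable_map_measure hg'.aestronglyMeasurable
      measurable_snd.aemeasurable).mp hg'
    exact h1
  have hcont : Continuous fun p : (Fin n → ℂ) × ℂ =>
      Complex.exp (2 * Real.pi * Complex.I * (((p.2 * ∑ i, v i * p.1 i).re : ℝ) : ℂ)) := by
    fun_prop
  have hInt : Integrable (fun p : (Fin n → ℂ) × ℂ =>
      Complex.exp (2 * Real.pi * Complex.I * (((p.2 * ∑ i, v i * p.1 i).re : ℝ) : ℂ))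
        * Complex.exp (-(Real.pi:ℂ) * (‖p.2‖:ℂ)^2)) (P.prod volume) :=
    hg2.bdd_mul hcont.aestronglyMeasurable (Filter.Eventually.of_forall fun p => le_of_eq (norm_char_exp _))
  have hcoe : ∀ {X : Type} [MeasurableSpace X] (M : Measure X) (f : X → ℝ),
      ((∫ x, f x ∂M : ℝ) : ℂ) = ∫ x, ((f x : ℝ) : ℂ) ∂M := fun M f => integral_ofReal.symm
  rw [← Complex.ofReal_inj, concProb, hcoe, hcoe]
  calc ∫ x, ((Real.exp (-Real.pi * ‖∑ i, v i * x i‖^2) : ℝ) : ℂ) ∂P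
      = ∫ x, Complex.exp (-(Real.pi:ℂ) * (‖∑ i, v i * x i‖:ℂ)^2) ∂P := by
        congr 1; funext x; rw [Complex.ofReal_exp]; congr 1; push_cast; ring
    _ = ∫ x, ∫ ξ : ℂ, Complex.exp (2*Real.pi*Complex.I*(((ξ * ∑ i, v i * x i).re : ℝ):ℂ))
          * Complex.exp (-(Real.pi:ℂ)*(‖ξ‖:ℂ)^2) ∂volume ∂P := by
        congr 1; funext x; rw [gauss_pt]
    _ = ∫ ξ : ℂ, ∫ x, Complex.exp (2*Real.pi*Complex.I*(((ξ * ∑ i, v i * x i).re : ℝ):ℂ))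
          * Complex.exp (-(Real.pi:ℂ)*(‖ξ‖:ℂ)^2) ∂P ∂volume := integral_integral_swap hInt
    _ = ∫ ξ : ℂ, ((((∏ i, (1 - μ/2 + μ/2 * charFn ν (ξ * v i))) * Real.exp (-Real.pi * ‖ξ‖^2) : ℝ)) : ℂ) := by
        congr 1; funext ξ
        rw [integral_mul_const]
        have hprod : ∀ x : Fin n → ℂ,
            Complex.exp (2*Real.pi*Complex.I*(((ξ * ∑ i, v i * x i).re : ℝ):ℂ))
            = ∏ i, Complex.exp (2*Real.pi*Complex.I*(((x i * (ξ * v i)).re : ℝ):ℂ)) := by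
          intro x
          rw [← Complex.exp_sum]
          congr 1
          have h4 : ξ * ∑ i, v i * x i = ∑ i, x i * (ξ * v i) := by
            rw [Finset.mul_sum]; exact Finset.sum_congr rfl fun i _ => by ring
          rw [h4, Complex.re_sum]
          push_cast
          rw [Finset.mul_sum]
        have hx : ∫ x, Complex.exp (2*Real.pi*Complex.I*(((ξ * ∑ i, v i * x i).re : ℝ):ℂ)) ∂P
            = ∏ i, ((1 - μ/2 + μ/2 * charFn ν (ξ * v i) : ℝ):ℂ) := by
          calc ∫ x, Complex.exp (2*Real.pi*Complex.I*(((ξ * ∑ i, v i * x i).re : ℝ):ℂ)) ∂P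
              = ∫ x : Fin n → ℂ, ∏ i,
                  (fun y : ℂ => Complex.exp (2*Real.pi*Complex.I*(((y * (ξ * v i)).re : ℝ):ℂ)))
                    (x i) ∂P := by simp_rw [hprod]
            _ = ∏ i, ∫ y, Complex.exp (2*Real.pi*Complex.I*(((y * (ξ * v i)).re : ℝ):ℂ))
                  ∂(diffLaw ν μ) := by
                  rw [hPdef]
                  exact integral_pi_prod (ι := Fin n) (diffLaw ν μ)
                    (fun i y => Complex.exp (2*Real.pi*Complex.I*(((y * (ξ * v i)).re : ℝ):ℂ)))
            _ = ∏ i, ((1 - μ/2 + μ/2 * charFn ν (ξ * v i) : ℝ):ℂ) :=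
                Finset.prod_congr rfl fun i _ => integral_char_diffLaw ν hμ.le hμ1 _
        rw [hx]
        push_cast [Complex.ofReal_exp]
        ring
end

section
/- Let α be a complex random variable, let v = (v₁,…,vₙ) be a tuple of complex numbers, and let r > 0. Then p_{r,α}(v) ≤ e^{πr²}·P₁(v). -/
open MeasureTheory ProbabilityTheory Filter

set_option maxHeartbeats 1000000 in
section
namespace SmallBallAux

open Real Complex MeasureTheory
open scoped RealInnerProductSpace

noncomputable def ch (ξ w : ℂ) : ℂ :=
  Complex.exp ((-(2 * (π : ℂ) * Complex.I)) * ((⟪w, ξ⟫ : ℝ) : ℂ))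

lemma selfdual (w : ℂ) :
    ∫ v : ℂ, Complex.exp (-(π:ℂ) * ‖v‖^2 + (-(2*π*Complex.I)) * ⟪w, v⟫)
      = Complex.exp (-(π:ℂ)*‖w‖^2) := by
  rw [GaussianFourier.integral_cexp_neg_mul_sq_norm_add (by simpa using Real.pi_pos) _ w]
  have hπ : (π:ℂ) ≠ 0 := by exact_mod_cast Real.pi_ne_zero
  rw [Complex.finrank_real_complex, div_self hπ]
  norm_num
  congr 1
  rw [show ((2*(π:ℂ)*Complex.I))^2 = -(4*(π:ℂ)^2) by rw [mul_pow]; simp [Complex.I_sq]; ring]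
  field_simp

lemma norm_ch (ξ w : ℂ) : ‖ch ξ w‖ = 1 := by
  rw [ch, Complex.norm_exp]
  simp [Complex.mul_re]

lemma ch_add (ξ w w' : ℂ) : ch ξ (w + w') = ch ξ w * ch ξ w' := by
  rw [ch, ch, ch, ← Complex.exp_add, inner_add_left]
  push_cast
  ring_nf

lemma ch_zero (ξ : ℂ) : ch ξ 0 = 1 := by simp [ch]

lemma conj_ch (ξ w : ℂ) : (starRingEnd ℂ) (ch ξ w) = ch ξ (-w) := by
  rw [ch, ch, ← Complex.exp_conj, inner_neg_left]
  congr 1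
  simp only [map_mul, map_neg, Complex.conj_I, Complex.conj_ofReal, map_ofNat]
  push_cast
  ring

lemma continuous_ch : Continuous fun p : ℂ × ℂ => ch p.1 p.2 := by
  unfold ch
  exact Complex.continuous_exp.comp (continuous_const.mul
    (Complex.continuous_ofReal.comp (continuous_inner.comp
      (continuous_snd.prodMk continuous_fst))))

lemma gauss_ofReal (ξ : ℂ) :
    Complex.exp (-(π:ℂ) * (‖ξ‖:ℂ)^2) = ((Real.exp (-π * ‖ξ‖^2) : ℝ) : ℂ) := by
  rw [Complex.ofReal_exp]
  congr 1
  push_cast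
  ring

lemma norm_gauss (ξ : ℂ) :
    ‖Complex.exp (-(π:ℂ) * (‖ξ‖:ℂ)^2)‖ = Real.exp (-π * ‖ξ‖^2) := by
  rw [gauss_ofReal, Complex.norm_real, Real.norm_eq_abs, abs_of_pos (Real.exp_pos _)]

lemma integrable_gaussR : Integrable (fun ξ : ℂ => Real.exp (-π * ‖ξ‖^2)) := by
  have h := (GaussianFourier.integrable_cexp_neg_mul_sq_norm_add
    (b := (π:ℂ)) (by simpa using Real.pi_pos) 0 (0 : ℂ)).norm
  refine h.congr (Filter.Eventually.of_forall fun ξ => ?_)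
  simp only [zero_mul, add_zero]
  rw [norm_gauss]


lemma integrable_bdd {X : Type*} [MeasurableSpace X] {μ : Measure X} [IsFiniteMeasure μ]
    {f : X → ℂ} (hf : AEStronglyMeasurable f μ) {C : ℝ} (h : ∀ x, ‖f x‖ ≤ C) :
    Integrable f μ :=
  Integrable.mono' (integrable_const C) hf (Filter.Eventually.of_forall h)

lemma aesm_ch {X : Type*} [MeasurableSpace X] {μ : Measure X} {T : X → ℂ}
    (hT : Measurable T) (ξ : ℂ) : AEStronglyMeasurable (fun x => ch ξ (T x)) μ :=
  (continuous_ch.measurable.comp (measurable_const.prodMk hT)).aestronglyMeasurable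

lemma integrable_ch {X : Type*} [MeasurableSpace X] {μ : Measure X} [IsFiniteMeasure μ]
    {T : X → ℂ} (hT : Measurable T) (ξ : ℂ) : Integrable (fun x => ch ξ (T x)) μ :=
  integrable_bdd (aesm_ch hT ξ) (fun x => le_of_eq (norm_ch ξ (T x)))

lemma norm_integral_ch_le_one {X : Type*} [MeasurableSpace X] {μ : Measure X}
    [IsProbabilityMeasure μ] (T : X → ℂ) (ξ : ℂ) : ‖∫ x, ch ξ (T x) ∂μ‖ ≤ 1 := by
  have := norm_integral_le_of_norm_le_const
    (f := fun x => ch ξ (T x)) (C := 1) (μ := μ)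
    (Filter.Eventually.of_forall fun x => le_of_eq (norm_ch ξ (T x)))
  simpa using this

lemma continuous_ch_left (w : ℂ) : Continuous fun ξ : ℂ => ch ξ w := by
  unfold ch
  exact Complex.continuous_exp.comp (continuous_const.mul
    (Complex.continuous_ofReal.comp (Continuous.inner continuous_const continuous_id)))

lemma continuous_gauss : Continuous fun ξ : ℂ => Complex.exp (-(π:ℂ) * (‖ξ‖:ℂ)^2) :=
  Complex.continuous_exp.comp (continuous_const.mul
    ((Complex.continuous_ofReal.comp continuous_norm).pow 2))

lemma continuous_charInt {X : Type*} [MeasurableSpace X] {μ : Measure X}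
    [IsProbabilityMeasure μ] {T : X → ℂ} (hT : Measurable T) :
    Continuous fun ξ : ℂ => ∫ x, ch ξ (T x) ∂μ := by
  refine continuous_of_dominated (fun ξ => aesm_ch hT ξ)
    (fun ξ => Filter.Eventually.of_forall fun x => le_of_eq (norm_ch ξ (T x)))
    (integrable_const 1) ?_
  exact Filter.Eventually.of_forall fun x => continuous_ch_left (T x)

lemma fubini_key {X : Type*} [MeasurableSpace X] (μ : Measure X) [IsProbabilityMeasure μ]
    {T : X → ℂ} (hT : Measurable T) :
    ∫ x, Complex.exp (-(π:ℂ) * (‖T x‖:ℂ)^2) ∂μ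
      = ∫ ξ : ℂ, Complex.exp (-(π:ℂ) * (‖ξ‖:ℂ)^2) * ∫ x, ch ξ (T x) ∂μ := by
  have hmeasF : AEStronglyMeasurable
      (fun p : X × ℂ => Complex.exp (-(π:ℂ) * (‖p.2‖:ℂ)^2) * ch p.2 (T p.1))
      (μ.prod volume) := by
    apply Measurable.aestronglyMeasurable
    have m1 : Measurable fun p : X × ℂ => Complex.exp (-(π:ℂ) * (‖p.2‖:ℂ)^2) :=
      (Complex.continuous_exp.comp (continuous_const.mul
        ((Complex.continuous_ofReal.comp continuous_norm).pow 2))).measurable.comp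
        measurable_snd
    have m2 : Measurable fun p : X × ℂ => ch p.2 (T p.1) := by
      unfold ch
      apply Complex.measurable_exp.comp
      apply Measurable.const_mul
      exact Complex.measurable_ofReal.comp
        (Measurable.inner (hT.comp measurable_fst) measurable_snd)
    exact m1.mul m2
  have hnormF : ∀ p : X × ℂ,
      ‖Complex.exp (-(π:ℂ) * (‖p.2‖:ℂ)^2) * ch p.2 (T p.1)‖ = Real.exp (-π * ‖p.2‖^2) := by
    intro p
    rw [norm_mul, norm_ch, norm_gauss, mul_one]
  have hint : Integrable
      (fun p : X × ℂ => Complex.exp (-(π:ℂ) * (‖p.2‖:ℂ)^2) * ch p.2 (T p.1))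
      (μ.prod volume) := by
    rw [integrable_prod_iff hmeasF]
    constructor
    · refine Filter.Eventually.of_forall fun x => ?_
      refine integrable_gaussR.mono' ?_ (Filter.Eventually.of_forall fun ξ => ?_)
      · exact (continuous_gauss.mul (continuous_ch_left (T x))).aestronglyMeasurable
      · exact le_of_eq (hnormF (x, ξ))
    · refine (integrable_const (∫ ξ : ℂ, Real.exp (-π * ‖ξ‖^2))).congr ?_
      refine Filter.Eventually.of_forall fun x => ?_
      simp only
      rw [← integral_congr_ae (Filter.Eventually.of_forall fun ξ => (hnormF (x, ξ)))]
  have hsd : ∀ w : ℂ, Complex.exp (-(π:ℂ) * (‖w‖:ℂ)^2)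
      = ∫ ξ : ℂ, Complex.exp (-(π:ℂ) * (‖ξ‖:ℂ)^2) * ch ξ w := by
    intro w
    rw [← selfdual w]
    congr 1
    funext ξ
    rw [Complex.exp_add]
    rfl
  calc ∫ x, Complex.exp (-(π:ℂ) * (‖T x‖:ℂ)^2) ∂μ
      = ∫ x, ∫ ξ : ℂ, Complex.exp (-(π:ℂ) * (‖ξ‖:ℂ)^2) * ch ξ (T x) ∂volume ∂μ := by
        simp_rw [← hsd]
    _ = ∫ ξ : ℂ, ∫ x, Complex.exp (-(π:ℂ) * (‖ξ‖:ℂ)^2) * ch ξ (T x) ∂μ ∂volume :=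
        integral_integral_swap hint
    _ = ∫ ξ : ℂ, Complex.exp (-(π:ℂ) * (‖ξ‖:ℂ)^2) * ∫ x, ch ξ (T x) ∂μ := by
        simp_rw [integral_const_mul]

lemma integral_pi_prod {n : ℕ} (m : Measure ℂ) [SigmaFinite m] (f : Fin n → ℂ → ℂ) :
    ∫ x, ∏ i, f i (x i) ∂(Measure.pi fun _ : Fin n => m) = ∏ i, ∫ w, f i w ∂m := by
  letI : MeasureSpace ℂ := ⟨m⟩
  haveI : SigmaFinite (volume : Measure ℂ) := ‹_›
  exact MeasureTheory.integral_fintype_prod_eq_prod (μ := fun _ => m) f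

lemma ch_sum {n : ℕ} (ξ : ℂ) (f : Fin n → ℂ) :
    ch ξ (∑ i, f i) = ∏ i, ch ξ (f i) := by
  rw [ch, sum_inner]
  push_cast
  rw [Finset.mul_sum, Complex.exp_sum]
  rfl

lemma integral_ch_pi {n : ℕ} (m : Measure ℂ) [IsProbabilityMeasure m] (v : Fin n → ℂ) (ξ : ℂ) :
    ∫ x, ch ξ (∑ i, v i * x i) ∂(Measure.pi fun _ : Fin n => m)
      = ∏ i, ∫ w, ch ξ (v i * w) ∂m := by
  rw [← integral_pi_prod m (fun i w => ch ξ (v i * w))]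
  congr 1
  funext x
  exact ch_sum ξ (fun i => v i * x i)


lemma continuous_ch_right (ξ : ℂ) : Continuous fun w : ℂ => ch ξ w := by
  unfold ch
  exact Complex.continuous_exp.comp (continuous_const.mul
    (Complex.continuous_ofReal.comp (Continuous.inner continuous_id continuous_const)))


instance isProb_diffLaw (ν : Measure ℂ) [IsProbabilityMeasure ν] :
    IsProbabilityMeasure (diffLaw ν 1) := by
  constructor
  rw [diffLaw, Measure.add_apply, Measure.smul_apply, Measure.smul_apply,
    Measure.map_apply (show Measurable fun p : ℂ × ℂ => p.1 - p.2 from measurable_fst.sub measurable_snd) MeasurableSet.univ]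
  simp only [Set.preimage_univ, measure_univ, smul_eq_mul, mul_one]
  rw [← ENNReal.ofReal_add (by norm_num) (by norm_num)]
  norm_num

lemma integral_ch_diffLaw (ν : Measure ℂ) [IsProbabilityMeasure ν] (c ξ : ℂ) :
    ∫ u, ch ξ (c * u) ∂(diffLaw ν 1)
      = (((1 + ‖∫ w, ch ξ (c * w) ∂ν‖^2)/2 : ℝ) : ℂ) := by
  have hsub : Measurable fun p : ℂ × ℂ => p.1 - p.2 := measurable_fst.sub measurable_snd
  have hcont : Continuous fun u : ℂ => ch ξ (c * u) :=
    (continuous_ch_right ξ).comp (continuous_const.mul continuous_id)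
  have hmeas_cu : ∀ (m : Measure ℂ), AEStronglyMeasurable (fun u => ch ξ (c * u)) m :=
    fun m => hcont.aestronglyMeasurable
  have hint : Integrable (fun u => ch ξ (c * u)) (diffLaw ν 1) :=
    integrable_bdd (hmeas_cu _) (fun x => le_of_eq (norm_ch _ _))
  rw [diffLaw] at hint ⊢
  norm_num at hint ⊢
  rw [integral_add_measure hint.1 hint.2,
    integral_smul_measure, integral_smul_measure, integral_dirac,
    integral_map hsub.aemeasurable (hmeas_cu _)]
  have key : ∫ p : ℂ × ℂ, ch ξ (c * (p.1 - p.2)) ∂(ν.prod ν)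
      = ((‖∫ w, ch ξ (c * w) ∂ν‖^2 : ℝ) : ℂ) := by
    have h1 : ∀ p : ℂ × ℂ, ch ξ (c * (p.1 - p.2)) = ch ξ (c * p.1) * ch ξ (-(c * p.2)) := by
      intro p
      rw [← ch_add]
      congr 1
      ring
    simp_rw [h1]
    rw [MeasureTheory.integral_prod_mul (μ := ν) (ν := ν)
      (f := fun w => ch ξ (c * w)) (g := fun w => ch ξ (-(c * w)))]
    have h2 : ∫ w, ch ξ (-(c * w)) ∂ν = (starRingEnd ℂ) (∫ w, ch ξ (c * w) ∂ν) := by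
      rw [← integral_conj]
      congr 1
      funext w
      rw [conj_ch]
    rw [h2, Complex.mul_conj, Complex.normSq_eq_norm_sq]
  rw [key, ENNReal.toReal_ofReal (by norm_num), mul_zero, ch_zero]
  rw [real_smul, real_smul]
  push_cast
  ring


lemma integral_ofReal'' {X : Type*} [MeasurableSpace X] {m : MeasureTheory.Measure X} (f : X → ℝ) :
    ∫ x, ((f x : ℝ) : ℂ) ∂m = ((∫ x, f x ∂m : ℝ) : ℂ) := integral_ofReal


set_option maxHeartbeats 1000000 in
theorem main
    {Ω : Type*} [MeasureSpace Ω] [IsProbabilityMeasure (ℙ : Measure Ω)]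
    (α : Ω → ℂ) (hmeas : Measurable α)
    (n : ℕ) (v : Fin n → ℂ) (r : ℝ) (hr : 0 < r) :
    smallBall (Measure.map α ℙ) v r
      ≤ Real.exp (Real.pi * r ^ 2) * concProb (Measure.map α ℙ) 1 v := by
  set ν : Measure ℂ := Measure.map α ℙ with hν
  haveI hνp : IsProbabilityMeasure ν := Measure.isProbabilityMeasure_map hmeas.aemeasurable
  haveI := isProb_diffLaw ν
  set S : (Fin n → ℂ) → ℂ := fun x => ∑ i, v i * x i with hSdef
  have hS : Measurable S :=
    Finset.univ.measurable_sum fun i _ => by exact (measurable_pi_apply (X := fun _ : Fin n => ℂ) i).const_mul (v i)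
  set μn : Measure (Fin n → ℂ) := Measure.pi fun _ : Fin n => ν with hμn
  set μn' : Measure (Fin n → ℂ) := Measure.pi fun _ : Fin n => diffLaw ν 1 with hμn'
  haveI : IsProbabilityMeasure μn := inferInstance
  haveI : IsProbabilityMeasure μn' := inferInstance
  rw [smallBall]
  refine ciSup_le fun z => ?_
  -- characteristic-type functions
  set cc : ℂ → Fin n → ℂ := fun ξ i => ∫ w, ch ξ (v i * w) ∂ν with hccdef
  set Φ : ℂ → ℂ := fun ξ => ∫ x, ch ξ (S x - z) ∂μn with hΦdef
  set Ψ : ℂ → ℂ := fun ξ => ∫ x, ch ξ (S x) ∂μn' with hΨdef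
  have hTz : Measurable fun x => S x - z := hS.sub measurable_const
  have hΦc : Continuous Φ := continuous_charInt hTz
  have hΨc : Continuous Ψ := continuous_charInt hS
  have hΦ1 : ∀ ξ, ‖Φ ξ‖ ≤ 1 := fun ξ => norm_integral_ch_le_one _ ξ
  have hΨ1 : ∀ ξ, ‖Ψ ξ‖ ≤ 1 := fun ξ => norm_integral_ch_le_one _ ξ
  -- product formulas
  have hΦ_prod : ∀ ξ, ‖Φ ξ‖ = ∏ i, ‖cc ξ i‖ := by
    intro ξ
    have h1 : ∀ x, ch ξ (S x - z) = ch ξ (S x) * ch ξ (-z) := by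
      intro x
      rw [sub_eq_add_neg, ch_add]
    have h2 : Φ ξ = (∏ i, cc ξ i) * ch ξ (-z) := by
      rw [hΦdef]
      simp only [h1]
      rw [integral_mul_const]
      congr 1
      exact integral_ch_pi ν v ξ
    rw [h2, norm_mul, norm_ch, mul_one, norm_prod]
  have hΨ_prod : ∀ ξ, Ψ ξ = ((∏ i, (1 + ‖cc ξ i‖^2)/2 : ℝ) : ℂ) := by
    intro ξ
    have h0 : Ψ ξ = ∏ i, ∫ w, ch ξ (v i * w) ∂(diffLaw ν 1) := integral_ch_pi (diffLaw ν 1) v ξ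
    rw [h0, Complex.ofReal_prod]
    exact Finset.prod_congr rfl fun i _ => integral_ch_diffLaw ν (v i) ξ
  have hψ_nonneg : ∀ ξ, 0 ≤ ∏ i, (1 + ‖cc ξ i‖^2)/2 := fun ξ =>
    Finset.prod_nonneg fun i _ => by positivity
  have hΨ_norm : ∀ ξ, ‖Ψ ξ‖ = ∏ i, (1 + ‖cc ξ i‖^2)/2 := by
    intro ξ
    rw [hΨ_prod ξ, Complex.norm_real, Real.norm_eq_abs, _root_.abs_of_nonneg (hψ_nonneg ξ)]
  have hΦΨ : ∀ ξ, ‖Φ ξ‖ ≤ ‖Ψ ξ‖ := by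
    intro ξ
    rw [hΦ_prod ξ, hΨ_norm ξ]
    refine Finset.prod_le_prod (fun i _ => norm_nonneg _) (fun i _ => ?_)
    nlinarith [sq_nonneg (‖cc ξ i‖ - 1)]
  -- gaussian weight
  set g : ℂ → ℝ := fun ξ => Real.exp (-π * ‖ξ‖^2) with hgdef
  have hg_nonneg : ∀ ξ, 0 ≤ g ξ := fun ξ => le_of_lt (Real.exp_pos _)
  set G : ℂ → ℂ := fun ξ => Complex.exp (-(π:ℂ) * (‖ξ‖:ℂ)^2) with hGdef
  have hGg : ∀ ξ, G ξ = ((g ξ : ℝ) : ℂ) := fun ξ => gauss_ofReal ξ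
  have hgc : Continuous g := Real.continuous_exp.comp (continuous_const.mul (continuous_norm.pow 2))
  have hnormG : ∀ ξ, ‖G ξ‖ = g ξ := fun ξ => norm_gauss ξ
  -- integrability facts on ℂ
  have hintGΦ : Integrable (fun ξ => G ξ * Φ ξ) volume := by
    refine integrable_gaussR.mono' ((continuous_gauss.mul hΦc).aestronglyMeasurable)
      (Filter.Eventually.of_forall fun ξ => ?_)
    rw [norm_mul, hnormG]
    calc g ξ * ‖Φ ξ‖ ≤ g ξ * 1 := mul_le_mul_of_nonneg_left (hΦ1 ξ) (hg_nonneg ξ)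
    _ = g ξ := mul_one _
  have hintGΨ : Integrable (fun ξ => G ξ * Ψ ξ) volume := by
    refine integrable_gaussR.mono' ((continuous_gauss.mul hΨc).aestronglyMeasurable)
      (Filter.Eventually.of_forall fun ξ => ?_)
    rw [norm_mul, hnormG]
    calc g ξ * ‖Ψ ξ‖ ≤ g ξ * 1 := mul_le_mul_of_nonneg_left (hΨ1 ξ) (hg_nonneg ξ)
    _ = g ξ := mul_one _
  have hintgΦ : Integrable (fun ξ => g ξ * ‖Φ ξ‖) volume := by
    refine integrable_gaussR.mono' ((hgc.mul hΦc.norm).aestronglyMeasurable)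
      (Filter.Eventually.of_forall fun ξ => ?_)
    rw [Real.norm_eq_abs, _root_.abs_of_nonneg (mul_nonneg (hg_nonneg ξ) (norm_nonneg _))]
    calc g ξ * ‖Φ ξ‖ ≤ g ξ * 1 := mul_le_mul_of_nonneg_left (hΦ1 ξ) (hg_nonneg ξ)
    _ = g ξ := mul_one _
  have hintgΨ : Integrable (fun ξ => g ξ * ‖Ψ ξ‖) volume := by
    refine integrable_gaussR.mono' ((hgc.mul hΨc.norm).aestronglyMeasurable)
      (Filter.Eventually.of_forall fun ξ => ?_)
    rw [Real.norm_eq_abs, _root_.abs_of_nonneg (mul_nonneg (hg_nonneg ξ) (norm_nonneg _))]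
    calc g ξ * ‖Ψ ξ‖ ≤ g ξ * 1 := mul_le_mul_of_nonneg_left (hΨ1 ξ) (hg_nonneg ξ)
    _ = g ξ := mul_one _
  -- key identities
  have key1 : ((∫ x, Real.exp (-π * ‖S x - z‖^2) ∂μn : ℝ) : ℂ) = ∫ ξ : ℂ, G ξ * Φ ξ := by
    rw [← integral_ofReal'']
    simp_rw [← gauss_ofReal]
    exact fubini_key μn hTz
  have key2 : ((concProb ν 1 v : ℝ) : ℂ) = ∫ ξ : ℂ, G ξ * Ψ ξ := by
    have hcp : concProb ν 1 v = ∫ x, Real.exp (-π * ‖S x‖^2) ∂μn' := rfl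
    rw [hcp, ← integral_ofReal'']
    simp_rw [← gauss_ofReal]
    exact fubini_key μn' hS
  -- Step B chain
  have stepB : ∫ x, Real.exp (-π * ‖S x - z‖^2) ∂μn ≤ concProb ν 1 v := by
    have e1 : ∫ x, Real.exp (-π * ‖S x - z‖^2) ∂μn = (∫ ξ : ℂ, G ξ * Φ ξ).re := by
      rw [← key1, Complex.ofReal_re]
    have e2 : (∫ ξ : ℂ, G ξ * Ψ ξ).re = concProb ν 1 v := by
      rw [← key2, Complex.ofReal_re]
    rw [e1, ← e2]
    calc (∫ ξ : ℂ, G ξ * Φ ξ).re ≤ ‖∫ ξ : ℂ, G ξ * Φ ξ‖ := Complex.re_le_norm _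
      _ ≤ ∫ ξ : ℂ, ‖G ξ * Φ ξ‖ := norm_integral_le_integral_norm _
      _ = ∫ ξ : ℂ, g ξ * ‖Φ ξ‖ := by
          refine integral_congr_ae (Filter.Eventually.of_forall fun ξ => ?_)
          show ‖G ξ * Φ ξ‖ = g ξ * ‖Φ ξ‖
          rw [norm_mul, hnormG]
      _ ≤ ∫ ξ : ℂ, g ξ * ‖Ψ ξ‖ := by
          refine integral_mono hintgΦ hintgΨ fun ξ => ?_
          exact mul_le_mul_of_nonneg_left (hΦΨ ξ) (hg_nonneg ξ)
      _ = (∫ ξ : ℂ, G ξ * Ψ ξ).re := by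
          have h : ∫ ξ : ℂ, G ξ * Ψ ξ = ((∫ ξ : ℂ, g ξ * ‖Ψ ξ‖ : ℝ) : ℂ) := by
            rw [← integral_ofReal'']
            refine integral_congr_ae (Filter.Eventually.of_forall fun ξ => ?_)
            show G ξ * Ψ ξ = ((g ξ * ‖Ψ ξ‖ : ℝ) : ℂ)
            rw [hGg ξ, hΨ_norm ξ, hΨ_prod ξ, Complex.ofReal_mul]
          rw [h, Complex.ofReal_re]
  -- Step A : small ball event vs gaussian weight
  have hsetm : MeasurableSet {x : Fin n → ℂ | dist (S x) z ≤ r} :=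
    measurableSet_le (hS.dist measurable_const) measurable_const
  have hexp_meas : Measurable fun x : Fin n → ℂ => Real.exp (-π * ‖S x - z‖^2) := by
    apply Real.measurable_exp.comp
    exact (((hS.sub measurable_const).norm.pow measurable_const).const_mul (-π))
  have hexp_int : Integrable (fun x => Real.exp (-π * ‖S x - z‖^2)) μn := by
    refine Integrable.mono' (integrable_const 1) hexp_meas.aestronglyMeasurable
      (Filter.Eventually.of_forall fun x => ?_)
    rw [Real.norm_eq_abs, abs_of_pos (Real.exp_pos _)]
    refine Real.exp_le_one_iff.mpr ?_
    have := sq_nonneg ‖S x - z‖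
    nlinarith [Real.pi_pos]
  have stepA : (μn {x | dist (S x) z ≤ r}).toReal
      ≤ Real.exp (π * r^2) * ∫ x, Real.exp (-π * ‖S x - z‖^2) ∂μn := by
    have hind : (μn {x | dist (S x) z ≤ r}).toReal
        = ∫ x, Set.indicator {x | dist (S x) z ≤ r} (fun _ => (1:ℝ)) x ∂μn := by
      rw [integral_indicator_const (1:ℝ) hsetm, smul_eq_mul, mul_one]; rfl
    rw [hind]
    have hmono : ∫ x, Set.indicator {x | dist (S x) z ≤ r} (fun _ => (1:ℝ)) x ∂μn
        ≤ ∫ x, Real.exp (π * r^2) * Real.exp (-π * ‖S x - z‖^2) ∂μn := by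
      refine integral_mono ((integrable_const (1:ℝ)).indicator hsetm)
        (hexp_int.const_mul _) fun x => ?_
      by_cases hx : x ∈ {x | dist (S x) z ≤ r}
      · rw [Set.indicator_of_mem hx]
        have hxr : ‖S x - z‖ ≤ r := by rwa [← dist_eq_norm]
        rw [← Real.exp_add]
        refine Real.one_le_exp ?_
        have h1 : ‖S x - z‖^2 ≤ r^2 := by nlinarith [norm_nonneg (S x - z)]
        nlinarith [Real.pi_pos]
      · rw [Set.indicator_of_notMem hx]
        positivity
    calc ∫ x, Set.indicator {x | dist (S x) z ≤ r} (fun _ => (1:ℝ)) x ∂μn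
        ≤ ∫ x, Real.exp (π * r^2) * Real.exp (-π * ‖S x - z‖^2) ∂μn := hmono
      _ = Real.exp (π * r^2) * ∫ x, Real.exp (-π * ‖S x - z‖^2) ∂μn := by
          rw [integral_const_mul]
  calc (μn {x | dist (S x) z ≤ r}).toReal
      ≤ Real.exp (π * r^2) * ∫ x, Real.exp (-π * ‖S x - z‖^2) ∂μn := stepA
    _ ≤ Real.exp (π * r^2) * concProb ν 1 v :=
        mul_le_mul_of_nonneg_left stepB (le_of_lt (Real.exp_pos _))

end SmallBallAux
end

/-- **Concentration probability bounds small ball probability** (Lemma 4.3). -/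
theorem smallBall_le_concProb
    {Ω : Type*} [MeasureSpace Ω] [IsProbabilityMeasure (ℙ : Measure Ω)]
    (α : Ω → ℂ) (hmeas : Measurable α)
    (n : ℕ) (v : Fin n → ℂ) (r : ℝ) (hr : 0 < r) :
    smallBall (Measure.map α ℙ) v r
      ≤ Real.exp (Real.pi * r ^ 2) * concProb (Measure.map α ℙ) 1 v :=
  SmallBallAux.main α hmeas n v r hr
end

section
/- Let α be a complex random variable, let v = (v₁,…,vₙ) be a tuple of complex numbers, let r > 0 and 0 < μ ≤ 1, and let α·I_μ denote the product of α with an independent Bernoulli variable equal to 1 with probability μ and 0 otherwise. Then p_{r,αI_μ}(v) ≤ e^{πr²}·P_μ(v). -/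
open MeasureTheory ProbabilityTheory Filter

section AuxSmallBall
open MeasureTheory ProbabilityTheory Complex Real

noncomputable def ep (t : ℝ) : ℂ := Complex.exp (2 * Real.pi * Complex.I * t)

lemma ep_add (s t : ℝ) : ep (s + t) = ep s * ep t := by
  rw [ep, ep, ep, ← Complex.exp_add]; push_cast; ring_nf

lemma ep_zero : ep 0 = 1 := by simp [ep]

lemma norm_ep (t : ℝ) : ‖ep t‖ = 1 := by
  rw [ep, Complex.norm_exp]
  have : (2 * (Real.pi : ℂ) * Complex.I * t).re = 0 := by simp
  rw [this, Real.exp_zero]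

lemma gauss1 (a : ℝ) : ∫ s : ℝ, (Real.exp (-(Real.pi * s ^ 2)) : ℂ) * ep (a * s)
    = (Real.exp (-(Real.pi * a ^ 2)) : ℂ) := by
  have h := congrFun (fourier_gaussian_pi (b := 1) (by norm_num)) (-a)
  rw [Real.fourier_real_eq_integral_exp_smul] at h
  simp only [one_cpow, neg_mul, mul_neg, neg_neg, div_one, mul_one] at h
  calc ∫ s : ℝ, (Real.exp (-(Real.pi * s ^ 2)) : ℂ) * ep (a * s)
      = ∫ v : ℝ, Complex.exp (↑(2 * Real.pi * v * a) * Complex.I) • Complex.exp (-(↑Real.pi * ↑v ^ 2)) := by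
        congr 1; funext s
        rw [smul_eq_mul, mul_comm, ep, Complex.ofReal_exp]
        congr 2
        · push_cast; ring
        · push_cast; ring
    _ = 1 * Complex.exp (-(↑Real.pi * (↑(-a) : ℂ) ^ 2)) := h
    _ = (Real.exp (-(Real.pi * a ^ 2)) : ℂ) := by
        rw [Complex.ofReal_exp]; push_cast; ring_nf

noncomputable def ipr (a b : ℂ) : ℝ := a.re * b.re + a.im * b.im

lemma ipr_mul (v w ξ : ℂ) : ipr (v * w) ξ = ipr w ((starRingEnd ℂ) v * ξ) := by
  simp [ipr, Complex.mul_re, Complex.mul_im]; ring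

lemma ipr_add (a b c : ℂ) : ipr (a + b) c = ipr a c + ipr b c := by simp [ipr]; ring

lemma ipr_sub (a b c : ℂ) : ipr (a - b) c = ipr a c - ipr b c := by simp [ipr]; ring

lemma ipr_sum {n : ℕ} (f : Fin n → ℂ) (c : ℂ) : ipr (∑ i, f i) c = ∑ i, ipr (f i) c := by
  simp [ipr, Finset.sum_mul, ← Finset.sum_add_distrib]

lemma integrable_gaussC : Integrable (fun ξ : ℂ => Real.exp (-(Real.pi * ‖ξ‖ ^ 2))) volume := by
  have hmp := Complex.volume_preserving_equiv_real_prod.symm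
  rw [← hmp.integrable_comp_emb (MeasurableEquiv.measurableEmbedding _)]
  have : ((fun ξ : ℂ => Real.exp (-(Real.pi * ‖ξ‖ ^ 2))) ∘ Complex.measurableEquivRealProd.symm)
      = fun p : ℝ × ℝ => Real.exp (-(Real.pi * p.1 ^ 2)) * Real.exp (-(Real.pi * p.2 ^ 2)) := by
    funext p
    simp only [Function.comp_apply, ← Real.exp_add]
    congr 1
    rw [Complex.measurableEquivRealProd_symm_apply, Complex.sq_norm,
      Complex.normSq_mk]
    ring
  rw [this]
  exact (integrable_exp_neg_mul_sq Real.pi_pos).comp_sub_right 0 |>.mul_prod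
    ((integrable_exp_neg_mul_sq Real.pi_pos).comp_sub_right 0) |>.congr (by
      filter_upwards with p; simp [neg_mul])

lemma gaussC (w : ℂ) : ∫ ξ : ℂ, (Real.exp (-(Real.pi * ‖ξ‖ ^ 2)) : ℂ) * ep (ipr w ξ)
    = (Real.exp (-(Real.pi * ‖w‖ ^ 2)) : ℂ) := by
  have hmp := Complex.volume_preserving_equiv_real_prod.symm
  rw [← hmp.integral_comp (MeasurableEquiv.measurableEmbedding _)]
  have heq : (fun p : ℝ × ℝ => (Real.exp (-(Real.pi * ‖(Complex.measurableEquivRealProd.symm p : ℂ)‖ ^ 2)) : ℂ)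
        * ep (ipr w (Complex.measurableEquivRealProd.symm p)))
      = fun p : ℝ × ℝ => ((Real.exp (-(Real.pi * p.1 ^ 2)) : ℂ) * ep (w.re * p.1))
        * ((Real.exp (-(Real.pi * p.2 ^ 2)) : ℂ) * ep (w.im * p.2)) := by
    funext p
    have h1 : (Complex.measurableEquivRealProd.symm p : ℂ) = Complex.mk p.1 p.2 :=
      Complex.measurableEquivRealProd_symm_apply p
    rw [h1]
    have h2 : ‖Complex.mk p.1 p.2‖ ^ 2 = p.1 ^ 2 + p.2 ^ 2 := by
      rw [Complex.sq_norm, Complex.normSq_mk]; ring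
    have h3 : ipr w (Complex.mk p.1 p.2) = w.re * p.1 + w.im * p.2 := by simp [ipr]
    rw [h2, h3, ep_add]
    rw [show -(Real.pi * (p.1 ^ 2 + p.2 ^ 2)) = -(Real.pi * p.1 ^ 2) + -(Real.pi * p.2 ^ 2) by ring,
      Real.exp_add, Complex.ofReal_mul]
    ring
  calc ∫ p : ℝ × ℝ, (Real.exp (-(Real.pi * ‖(Complex.measurableEquivRealProd.symm p : ℂ)‖ ^ 2)) : ℂ)
        * ep (ipr w (Complex.measurableEquivRealProd.symm p))
      = ∫ p : ℝ × ℝ, ((Real.exp (-(Real.pi * p.1 ^ 2)) : ℂ) * ep (w.re * p.1))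
        * ((Real.exp (-(Real.pi * p.2 ^ 2)) : ℂ) * ep (w.im * p.2)) := by rw [heq]
    _ = (∫ s : ℝ, (Real.exp (-(Real.pi * s ^ 2)) : ℂ) * ep (w.re * s))
        * (∫ t : ℝ, (Real.exp (-(Real.pi * t ^ 2)) : ℂ) * ep (w.im * t)) := by
        rw [← integral_prod_mul]; rfl
    _ = (Real.exp (-(Real.pi * ‖w‖ ^ 2)) : ℂ) := by
        rw [gauss1, gauss1, ← Complex.ofReal_mul, ← Real.exp_add]
        congr 2
        rw [Complex.sq_norm, Complex.normSq_apply]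
        ring

lemma ep_sum {n : ℕ} (f : Fin n → ℝ) : ep (∑ i, f i) = ∏ i, ep (f i) := by
  unfold ep
  rw [← Complex.exp_sum]
  congr 1
  push_cast
  rw [Finset.mul_sum]

lemma ep_neg (t : ℝ) : ep (-t) = (starRingEnd ℂ) (ep t) := by
  unfold ep
  rw [← Complex.exp_conj]
  congr 1
  simp [Complex.ext_iff]

lemma continuous_ep : Continuous ep := by
  unfold ep; fun_prop

lemma continuous_ipr : Continuous (fun p : ℂ × ℂ => ipr p.1 p.2) := by
  unfold ipr; fun_prop

noncomputable def chF (m : Measure ℂ) (ξ : ℂ) : ℂ := ∫ w, ep (ipr w ξ) ∂m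

lemma integrable_bdd {X : Type*} [MeasurableSpace X] {m : Measure X} [IsFiniteMeasure m]
    {f : X → ℂ} (hf : AEStronglyMeasurable f m) (C : ℝ) (h : ∀ x, ‖f x‖ ≤ C) :
    Integrable f m :=
  (integrable_const C).mono' hf (Filter.Eventually.of_forall h)

lemma norm_chF_le_one (m : Measure ℂ) [IsProbabilityMeasure m] (ξ : ℂ) : ‖chF m ξ‖ ≤ 1 := by
  refine le_trans (norm_integral_le_integral_norm _) ?_
  simp only [norm_ep]
  simp

lemma smeas_chF (m : Measure ℂ) [SFinite m] (c : ℂ) :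
    StronglyMeasurable fun ξ : ℂ => chF m (c * ξ) := by
  have hc : Continuous fun p : ℂ × ℂ => ep (ipr p.2 (c * p.1)) := by
    apply continuous_ep.comp
    exact continuous_ipr.comp (by fun_prop : Continuous fun p : ℂ × ℂ => (p.2, c * p.1))
  exact hc.stronglyMeasurable.integral_prod_right'

lemma ofReal_integral {X : Type*} [MeasurableSpace X] (m : Measure X) (f : X → ℝ) :
    ((∫ x, f x ∂m : ℝ) : ℂ) = ∫ x, ((f x : ℝ) : ℂ) ∂m := integral_ofReal.symm

lemma pi_integral_prod {E : Type*} [MeasurableSpace E] (m : Measure E) [SigmaFinite m]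
    {ι : Type*} [Fintype ι] (f : ι → E → ℂ) :
    ∫ x, ∏ i, f i (x i) ∂(Measure.pi fun _ : ι => m) = ∏ i, ∫ w, f i w ∂m := by
  letI : MeasureSpace E := { volume := m }
  exact MeasureTheory.integral_fintype_prod_eq_prod f

lemma walk_integral_eq (m : Measure ℂ) [IsProbabilityMeasure m] {n : ℕ} (v : Fin n → ℂ) (z : ℂ) :
    ((∫ x : Fin n → ℂ, Real.exp (-(Real.pi * ‖(∑ i, v i * x i) - z‖ ^ 2))
        ∂(Measure.pi fun _ => m) : ℝ) : ℂ)
      = ∫ ξ : ℂ, (Real.exp (-(Real.pi * ‖ξ‖ ^ 2)) : ℂ) *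
          (ep (-(ipr z ξ)) * ∏ i, chF m ((starRingEnd ℂ) (v i) * ξ)) := by
  set P := (Measure.pi fun _ : Fin n => m) with hP
  have hW : Measurable fun x : Fin n → ℂ => ∑ i, v i * x i :=
    Finset.measurable_sum _ (fun i _ => by fun_prop)
  rw [ofReal_integral]
  have h1 : ∀ x : Fin n → ℂ, ((Real.exp (-(Real.pi * ‖(∑ i, v i * x i) - z‖ ^ 2)) : ℝ) : ℂ)
      = ∫ ξ : ℂ, (Real.exp (-(Real.pi * ‖ξ‖ ^ 2)) : ℂ) * ep (ipr ((∑ i, v i * x i) - z) ξ) :=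
    fun x => (gaussC _).symm
  simp only [h1]
  have hint : Integrable (Function.uncurry fun (x : Fin n → ℂ) (ξ : ℂ) =>
      (Real.exp (-(Real.pi * ‖ξ‖ ^ 2)) : ℂ) * ep (ipr ((∑ i, v i * x i) - z) ξ))
      (P.prod volume) := by
    have hH : Continuous fun q : ℂ × ℂ =>
        (Real.exp (-(Real.pi * ‖q.2‖ ^ 2)) : ℂ) * ep (ipr (q.1 - z) q.2) := by
      apply Continuous.mul
      · fun_prop
      · exact continuous_ep.comp (continuous_ipr.comp (by fun_prop :
          Continuous fun q : ℂ × ℂ => (q.1 - z, q.2)))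
    have hm : Measurable fun p : (Fin n → ℂ) × ℂ => ((∑ i, v i * p.1 i, p.2) : ℂ × ℂ) :=
      (hW.comp measurable_fst).prodMk measurable_snd
    apply Integrable.mono' (g := fun p : (Fin n → ℂ) × ℂ => Real.exp (-(Real.pi * ‖p.2‖ ^ 2)))
    · simpa using (integrable_const (1:ℝ) (μ := P)).mul_prod integrable_gaussC
    · exact (hH.measurable.comp hm).aestronglyMeasurable
    · filter_upwards with p
      rw [Function.uncurry]
      rw [norm_mul, norm_ep, Complex.norm_real]
      simp [abs_of_pos (Real.exp_pos _)]
  rw [integral_integral_swap hint]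
  congr 1
  funext ξ
  have h2 : ∀ x : Fin n → ℂ, (Real.exp (-(Real.pi * ‖ξ‖ ^ 2)) : ℂ)
        * ep (ipr ((∑ i, v i * x i) - z) ξ)
      = ((Real.exp (-(Real.pi * ‖ξ‖ ^ 2)) : ℂ) * ep (-(ipr z ξ)))
        * ∏ i, ep (ipr (x i) ((starRingEnd ℂ) (v i) * ξ)) := by
    intro x
    have : ipr ((∑ i, v i * x i) - z) ξ = -(ipr z ξ) + ∑ i, ipr (x i) ((starRingEnd ℂ) (v i) * ξ) := by
      rw [ipr_sub, ipr_sum]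
      simp only [ipr_mul]
      ring
    rw [this, ep_add, ep_sum]
    ring
  simp only [h2]
  rw [MeasureTheory.integral_const_mul, hP,
    pi_integral_prod m (fun i w => ep (ipr w ((starRingEnd ℂ) (v i) * ξ)))]
  have h3 : ∀ i, (∫ w, ep (ipr w ((starRingEnd ℂ) (v i) * ξ)) ∂m)
      = chF m ((starRingEnd ℂ) (v i) * ξ) := fun i => rfl
  simp only [h3]
  ring

lemma ipr_zero (ξ : ℂ) : ipr 0 ξ = 0 := by
  have := ipr_sub 0 0 ξ; simpa using this

lemma key_compare (m q : Measure ℂ) [IsProbabilityMeasure m] [IsProbabilityMeasure q]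
    (hq : ∀ ξ, chF q ξ = ((chF q ξ).re : ℂ))
    (hmq : ∀ ξ, ‖chF m ξ‖ ≤ (chF q ξ).re)
    {n : ℕ} (v : Fin n → ℂ) (z : ℂ) :
    ∫ x : Fin n → ℂ, Real.exp (-(Real.pi * ‖(∑ i, v i * x i) - z‖ ^ 2)) ∂(Measure.pi fun _ => m)
      ≤ ∫ y : Fin n → ℂ, Real.exp (-(Real.pi * ‖(∑ i, v i * y i)‖ ^ 2)) ∂(Measure.pi fun _ => q) := by
  set c : Fin n → ℂ := fun i => (starRingEnd ℂ) (v i) with hc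
  -- measurability of the products of characteristic functions
  have hmeasm : Measurable fun ξ : ℂ => ∏ i, chF m (c i * ξ) :=
    Finset.measurable_prod _ (fun i _ => (smeas_chF m (c i)).measurable)
  have hmeasq : Measurable fun ξ : ℂ => ∏ i, chF q (c i * ξ) :=
    Finset.measurable_prod _ (fun i _ => (smeas_chF q (c i)).measurable)
  have hGc : Continuous fun ξ : ℂ => ((Real.exp (-(Real.pi * ‖ξ‖ ^ 2)) : ℝ) : ℂ) := by fun_prop
  have hepc : Continuous fun ξ : ℂ => ep (-(ipr z ξ)) := by
    apply continuous_ep.comp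
    apply Continuous.neg
    exact continuous_ipr.comp (by fun_prop : Continuous fun ξ : ℂ => ((z, ξ) : ℂ × ℂ))
  -- integrability of the complex integrand for m
  have hintm : Integrable (fun ξ : ℂ => (Real.exp (-(Real.pi * ‖ξ‖ ^ 2)) : ℂ) *
      (ep (-(ipr z ξ)) * ∏ i, chF m (c i * ξ))) volume := by
    apply Integrable.mono' integrable_gaussC
    · exact ((hGc.measurable.mul (hepc.measurable.mul hmeasm))).aestronglyMeasurable
    · filter_upwards with ξ
      rw [norm_mul, norm_mul, norm_ep, Complex.norm_real, Real.norm_eq_abs, abs_of_pos (Real.exp_pos _), one_mul]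
      have h1 : ‖∏ i, chF m (c i * ξ)‖ ≤ 1 := by
        rw [norm_prod]
        exact Finset.prod_le_one (fun i _ => norm_nonneg _) (fun i _ => norm_chF_le_one m _)
      nlinarith [Real.exp_pos (-(Real.pi * ‖ξ‖ ^ 2)), norm_nonneg (∏ i, chF m (c i * ξ))]
  -- integrability of the real integrand for q
  have hbq : ∀ ξ : ℂ, |∏ i, (chF q (c i * ξ)).re| ≤ 1 := by
    intro ξ
    rw [Finset.abs_prod]
    refine Finset.prod_le_one (fun i _ => abs_nonneg _) (fun i _ => ?_)
    exact le_trans (Complex.abs_re_le_norm _) (by exact norm_chF_le_one q _)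
  have hintq : Integrable (fun ξ : ℂ => Real.exp (-(Real.pi * ‖ξ‖ ^ 2)) *
      ∏ i, (chF q (c i * ξ)).re) volume := by
    apply Integrable.mono' integrable_gaussC
    · exact ((by fun_prop : Measurable fun ξ : ℂ => Real.exp (-(Real.pi * ‖ξ‖ ^ 2))).mul
        (Finset.measurable_prod _ (fun i _ =>
          Complex.measurable_re.comp (smeas_chF q (c i)).measurable))).aestronglyMeasurable
    · filter_upwards with ξ
      rw [Real.norm_eq_abs, abs_mul, abs_of_pos (Real.exp_pos _)]
      nlinarith [Real.exp_pos (-(Real.pi * ‖ξ‖ ^ 2)), hbq ξ, abs_nonneg (∏ i, (chF q (c i * ξ)).re)]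
  -- the equality turning the real q-integrand into the complex one
  have heq : (fun ξ : ℂ => (Real.exp (-(Real.pi * ‖ξ‖ ^ 2)) : ℂ) *
        (ep (-(ipr 0 ξ)) * ∏ i, chF q (c i * ξ)))
      = fun ξ : ℂ => ((Real.exp (-(Real.pi * ‖ξ‖ ^ 2)) * ∏ i, (chF q (c i * ξ)).re : ℝ) : ℂ) := by
    funext ξ
    rw [ipr_zero, neg_zero, ep_zero, one_mul]
    have : ∏ i, chF q (c i * ξ) = ((∏ i, (chF q (c i * ξ)).re : ℝ) : ℂ) := by
      push_cast
      exact Finset.prod_congr rfl (fun i _ => hq _)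
    rw [this]
    push_cast
    ring
  calc ∫ x : Fin n → ℂ, Real.exp (-(Real.pi * ‖(∑ i, v i * x i) - z‖ ^ 2)) ∂(Measure.pi fun _ => m)
      = (((∫ x : Fin n → ℂ, Real.exp (-(Real.pi * ‖(∑ i, v i * x i) - z‖ ^ 2))
          ∂(Measure.pi fun _ => m) : ℝ)) : ℂ).re := (Complex.ofReal_re _).symm
    _ = (∫ ξ : ℂ, (Real.exp (-(Real.pi * ‖ξ‖ ^ 2)) : ℂ) *
          (ep (-(ipr z ξ)) * ∏ i, chF m (c i * ξ))).re := by rw [walk_integral_eq]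
    _ ≤ ‖∫ ξ : ℂ, (Real.exp (-(Real.pi * ‖ξ‖ ^ 2)) : ℂ) *
          (ep (-(ipr z ξ)) * ∏ i, chF m (c i * ξ))‖ := Complex.re_le_norm _
    _ ≤ ∫ ξ : ℂ, ‖(Real.exp (-(Real.pi * ‖ξ‖ ^ 2)) : ℂ) *
          (ep (-(ipr z ξ)) * ∏ i, chF m (c i * ξ))‖ := norm_integral_le_integral_norm _
    _ ≤ ∫ ξ : ℂ, Real.exp (-(Real.pi * ‖ξ‖ ^ 2)) * ∏ i, (chF q (c i * ξ)).re := by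
        apply integral_mono hintm.norm hintq
        intro ξ
        dsimp only
        rw [norm_mul, norm_mul, norm_ep, Complex.norm_real, Real.norm_eq_abs,
          abs_of_pos (Real.exp_pos _), one_mul, norm_prod]
        apply mul_le_mul_of_nonneg_left _ (Real.exp_pos _).le
        exact Finset.prod_le_prod (fun i _ => norm_nonneg _) (fun i _ => hmq _)
    _ = (∫ ξ : ℂ, (Real.exp (-(Real.pi * ‖ξ‖ ^ 2)) : ℂ) *
          (ep (-(ipr 0 ξ)) * ∏ i, chF q (c i * ξ))).re := by
        rw [heq, ← ofReal_integral, Complex.ofReal_re]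
    _ = (((∫ y : Fin n → ℂ, Real.exp (-(Real.pi * ‖(∑ i, v i * y i) - 0‖ ^ 2))
          ∂(Measure.pi fun _ => q) : ℝ)) : ℂ).re := by rw [walk_integral_eq]
    _ = ∫ y : Fin n → ℂ, Real.exp (-(Real.pi * ‖(∑ i, v i * y i)‖ ^ 2)) ∂(Measure.pi fun _ => q) := by
        rw [Complex.ofReal_re]
        simp only [sub_zero]



lemma isProb_bernoulliMix (ν : Measure ℂ) [IsProbabilityMeasure ν] {μ : ℝ}
    (h0 : 0 ≤ μ) (h1 : μ ≤ 1) : IsProbabilityMeasure (bernoulliMix ν μ) := by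
  constructor
  simp only [bernoulliMix, Measure.add_apply, Measure.smul_apply, measure_univ, smul_eq_mul,
    mul_one]
  rw [← ENNReal.ofReal_add h0 (by linarith)]
  norm_num

lemma isProb_diffLaw (ν : Measure ℂ) [IsProbabilityMeasure ν] {μ : ℝ}
    (h0 : 0 ≤ μ) (h1 : μ ≤ 1) : IsProbabilityMeasure (diffLaw ν μ) := by
  haveI : IsProbabilityMeasure (Measure.map (fun p : ℂ × ℂ => p.1 - p.2) (ν.prod ν)) :=
    Measure.isProbabilityMeasure_map (measurable_fst.sub measurable_snd).aemeasurable
  constructor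
  simp only [diffLaw, Measure.add_apply, Measure.smul_apply, measure_univ, smul_eq_mul, mul_one]
  rw [← ENNReal.ofReal_add (by linarith) (by linarith)]
  norm_num

lemma continuous_ep_ipr (ξ : ℂ) : Continuous fun w : ℂ => ep (ipr w ξ) :=
  continuous_ep.comp (continuous_ipr.comp (by fun_prop : Continuous fun w : ℂ => ((w, ξ) : ℂ × ℂ)))

lemma integrable_ep_ipr (m : Measure ℂ) [IsFiniteMeasure m] (ξ : ℂ) :
    Integrable (fun w => ep (ipr w ξ)) m :=
  integrable_bdd (continuous_ep_ipr ξ).aestronglyMeasurable 1 (fun w => (norm_ep _).le)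

lemma ep_sub' (s t : ℝ) : ep (s - t) = ep s * ep (-t) := by
  rw [← ep_add]; ring_nf

lemma chF_bernoulliMix (ν : Measure ℂ) [IsProbabilityMeasure ν] {μ : ℝ}
    (h0 : 0 ≤ μ) (h1 : μ ≤ 1) (ξ : ℂ) :
    chF (bernoulliMix ν μ) ξ = (μ : ℂ) * chF ν ξ + ((1 - μ : ℝ) : ℂ) := by
  unfold chF bernoulliMix
  rw [integral_add_measure ((integrable_ep_ipr ν ξ).smul_measure ENNReal.ofReal_ne_top)
      (((integrable_ep_ipr (Measure.dirac 0) ξ)).smul_measure ENNReal.ofReal_ne_top),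
    integral_smul_measure, integral_smul_measure,
    integral_dirac (fun w : ℂ => ep (ipr w ξ)) 0, ipr_zero, ep_zero,
    ENNReal.toReal_ofReal h0, ENNReal.toReal_ofReal (by linarith : (0:ℝ) ≤ 1 - μ)]
  simp [Complex.real_smul]

lemma chF_diffLaw (ν : Measure ℂ) [IsProbabilityMeasure ν] {μ : ℝ}
    (h0 : 0 ≤ μ) (h1 : μ ≤ 1) (ξ : ℂ) :
    chF (diffLaw ν μ) ξ = ((μ / 2 * ‖chF ν ξ‖ ^ 2 + (1 - μ / 2) : ℝ) : ℂ) := by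
  haveI : IsProbabilityMeasure (Measure.map (fun p : ℂ × ℂ => p.1 - p.2) (ν.prod ν)) :=
    Measure.isProbabilityMeasure_map (measurable_fst.sub measurable_snd).aemeasurable
  unfold chF diffLaw
  rw [integral_add_measure
      ((integrable_ep_ipr _ ξ).smul_measure ENNReal.ofReal_ne_top)
      (((integrable_ep_ipr (Measure.dirac 0) ξ)).smul_measure ENNReal.ofReal_ne_top),
    integral_smul_measure, integral_smul_measure,
    integral_dirac (fun w : ℂ => ep (ipr w ξ)) 0, ipr_zero, ep_zero,
    ENNReal.toReal_ofReal (by linarith : (0:ℝ) ≤ μ / 2),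
    ENNReal.toReal_ofReal (by linarith : (0:ℝ) ≤ 1 - μ / 2)]
  have hmap : ∫ w, ep (ipr w ξ) ∂(Measure.map (fun p : ℂ × ℂ => p.1 - p.2) (ν.prod ν))
      = ((‖chF ν ξ‖ ^ 2 : ℝ) : ℂ) := by
    rw [integral_map (by fun_prop : Measurable fun p : ℂ × ℂ => p.1 - p.2).aemeasurable
      (continuous_ep_ipr ξ).aestronglyMeasurable]
    have : (fun p : ℂ × ℂ => ep (ipr (p.1 - p.2) ξ))
        = fun p : ℂ × ℂ => ep (ipr p.1 ξ) * (starRingEnd ℂ) (ep (ipr p.2 ξ)) := by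
      funext p
      rw [ipr_sub, ep_sub', ep_neg]
    rw [this, integral_prod_mul (μ := ν) (ν := ν) (fun w => ep (ipr w ξ))
      (fun w => (starRingEnd ℂ) (ep (ipr w ξ))), integral_conj]
    rw [show (∫ w, ep (ipr w ξ) ∂ν) = chF ν ξ from rfl, Complex.mul_conj, Complex.normSq_eq_norm_sq]
  rw [hmap]
  simp only [Complex.real_smul, smul_eq_mul]
  rw [show (∫ w, ep (ipr w ξ) ∂ν) = chF ν ξ from rfl]
  push_cast
  try ring


end AuxSmallBall

/-- **Concentration probability bounds small ball probability, sparse version**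
(Lemma 4.4). -/
theorem smallBall_le_concProb_sparse
    {Ω : Type*} [MeasureSpace Ω] [IsProbabilityMeasure (ℙ : Measure Ω)]
    (α : Ω → ℂ) (hmeas : Measurable α)
    (n : ℕ) (v : Fin n → ℂ) (r : ℝ) (hr : 0 < r)
    (μ : ℝ) (hμ : 0 < μ) (hμ1 : μ ≤ 1) :
    smallBall (bernoulliMix (Measure.map α ℙ) μ) v r
      ≤ Real.exp (Real.pi * r ^ 2) * concProb (Measure.map α ℙ) μ v := by
  set ν := Measure.map α ℙ with hν
  haveI : IsProbabilityMeasure ν := Measure.isProbabilityMeasure_map hmeas.aemeasurable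
  haveI : IsProbabilityMeasure (bernoulliMix ν μ) := isProb_bernoulliMix ν hμ.le hμ1
  haveI : IsProbabilityMeasure (diffLaw ν μ) := isProb_diffLaw ν hμ.le hμ1
  have hqreal : ∀ ξ, chF (diffLaw ν μ) ξ = ((chF (diffLaw ν μ) ξ).re : ℂ) := by
    intro ξ
    rw [chF_diffLaw ν hμ.le hμ1 ξ, Complex.ofReal_re]
  have hmq : ∀ ξ, ‖chF (bernoulliMix ν μ) ξ‖ ≤ (chF (diffLaw ν μ) ξ).re := by
    intro ξ
    rw [chF_bernoulliMix ν hμ.le hμ1 ξ, chF_diffLaw ν hμ.le hμ1 ξ, Complex.ofReal_re]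
    have hx0 : (0:ℝ) ≤ ‖chF ν ξ‖ := norm_nonneg _
    have hx1 : ‖chF ν ξ‖ ≤ 1 := norm_chF_le_one ν ξ
    calc ‖(μ:ℂ) * chF ν ξ + ((1 - μ : ℝ) : ℂ)‖
        ≤ ‖(μ:ℂ) * chF ν ξ‖ + ‖((1 - μ : ℝ) : ℂ)‖ := norm_add_le _ _
      _ = μ * ‖chF ν ξ‖ + (1 - μ) := by
          rw [norm_mul, Complex.norm_real, Complex.norm_real, Real.norm_eq_abs,
            Real.norm_eq_abs, _root_.abs_of_nonneg hμ.le, _root_.abs_of_nonneg (by linarith : (0:ℝ) ≤ 1 - μ)]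
      _ ≤ μ / 2 * ‖chF ν ξ‖ ^ 2 + (1 - μ / 2) := by nlinarith [mul_nonneg hμ.le (sq_nonneg (‖chF ν ξ‖ - 1))]
  rw [smallBall]
  apply ciSup_le
  intro z
  set W : (Fin n → ℂ) → ℂ := fun x => ∑ i, v i * x i with hWdef
  have hW : Measurable W :=
    Finset.measurable_sum _ (fun i _ => by fun_prop)
  set P := (Measure.pi fun _ : Fin n => bernoulliMix ν μ) with hP
  have hSeq : {x : Fin n → ℂ | dist (∑ i, v i * x i) z ≤ r} = W ⁻¹' Metric.closedBall z r := by
    ext x; simp [Metric.mem_closedBall, hWdef]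
  have hS : MeasurableSet {x : Fin n → ℂ | dist (∑ i, v i * x i) z ≤ r} := by
    rw [hSeq]; exact hW measurableSet_closedBall
  have hmeas2 : Measurable fun x : Fin n → ℂ =>
      Real.exp (Real.pi * r ^ 2) * Real.exp (-(Real.pi * ‖W x - z‖ ^ 2)) := by
    apply Measurable.const_mul
    exact Real.measurable_exp.comp
      ((measurable_const.mul (((hW.sub measurable_const).norm).pow measurable_const)).neg)
  calc (P {x : Fin n → ℂ | dist (∑ i, v i * x i) z ≤ r}).toReal
      = ∫ x, ({x : Fin n → ℂ | dist (∑ i, v i * x i) z ≤ r}).indicator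
          (fun _ => (1:ℝ)) x ∂P := (integral_indicator_one hS).symm
    _ ≤ ∫ x, Real.exp (Real.pi * r ^ 2) * Real.exp (-(Real.pi * ‖W x - z‖ ^ 2)) ∂P := by
        apply integral_mono ((integrable_const (1:ℝ)).indicator hS)
        · apply Integrable.mono' (integrable_const (Real.exp (Real.pi * r ^ 2)))
          · exact hmeas2.aestronglyMeasurable
          · filter_upwards with x
            rw [Real.norm_eq_abs, abs_of_pos (by positivity)]
            have : Real.exp (-(Real.pi * ‖W x - z‖ ^ 2)) ≤ 1 := by
              rw [Real.exp_le_one_iff, neg_nonpos]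
              positivity
            nlinarith [Real.exp_pos (Real.pi * r ^ 2)]
        · intro x
          dsimp only
          by_cases hx : x ∈ {x : Fin n → ℂ | dist (∑ i, v i * x i) z ≤ r}
          · rw [Set.indicator_of_mem hx]
            rw [← Real.exp_add, Real.one_le_exp_iff]
            have hd : ‖W x - z‖ ≤ r := by
              rw [← dist_eq_norm]; exact hx
            have hd0 : (0:ℝ) ≤ ‖W x - z‖ := norm_nonneg _
            nlinarith [Real.pi_pos, mul_self_le_mul_self hd0 hd]
          · rw [Set.indicator_of_notMem hx]
            positivity
    _ = Real.exp (Real.pi * r ^ 2) * ∫ x, Real.exp (-(Real.pi * ‖W x - z‖ ^ 2)) ∂P :=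
        MeasureTheory.integral_const_mul _ _
    _ ≤ Real.exp (Real.pi * r ^ 2)
          * ∫ y, Real.exp (-(Real.pi * ‖∑ i, v i * y i‖ ^ 2)) ∂(Measure.pi fun _ => diffLaw ν μ) := by
        apply mul_le_mul_of_nonneg_left _ (Real.exp_pos _).le
        exact key_compare (bernoulliMix ν μ) (diffLaw ν μ) hqreal hmq v z
    _ = Real.exp (Real.pi * r ^ 2) * concProb ν μ v := by
        rw [concProb]
        simp only [neg_mul]
end

section
/- There is an absolute constant c > 0 such that for every complex random variable α, every w ∈ ℂ, and every 0 < μ ≤ 1, one has (1 − μ/2) + (μ/2)·f(w) ≤ exp(−c·μ·‖w‖_α²); in particular f(w) ≤ 1 − c·‖w‖_α². -/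
open MeasureTheory ProbabilityTheory Filter

section AuxLemmas

open Real

lemma cos_le_one_sub_aux (s : ℝ) :
    Real.cos (2 * Real.pi * s) ≤ 1 - 8 * |s - (round s : ℝ)| ^ 2 := by
  set u : ℝ := s - (round s : ℝ) with hu_def
  have hu : |u| ≤ 1 / 2 := abs_sub_round s
  have h1 : Real.cos (2 * Real.pi * s) = Real.cos (2 * Real.pi * u) := by
    have h : 2 * Real.pi * s = 2 * Real.pi * u + (round s : ℤ) * (2 * Real.pi) := by
      push_cast [hu_def]; ring
    rw [h, Real.cos_add_int_mul_two_pi]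
  have h2 : Real.cos (2 * Real.pi * u) = 1 - 2 * Real.sin (Real.pi * u) ^ 2 := by
    rw [show 2 * Real.pi * u = 2 * (Real.pi * u) by ring, Real.cos_two_mul', Real.cos_sq']
    ring
  have h3 : 2 * |u| ≤ Real.sin (Real.pi * |u|) := by
    have hb : Real.pi * |u| ≤ Real.pi / 2 := by
      nlinarith [Real.pi_pos, abs_nonneg u]
    have := Real.mul_le_sin (x := Real.pi * |u|) (by positivity) hb
    calc 2 * |u| = 2 / Real.pi * (Real.pi * |u|) := by
          field_simp
      _ ≤ Real.sin (Real.pi * |u|) := this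
  have h4 : Real.sin (Real.pi * u) ^ 2 = Real.sin (Real.pi * |u|) ^ 2 := by
    rcases abs_cases u with ⟨h, _⟩ | ⟨h, _⟩
    · rw [h]
    · rw [h, mul_neg, Real.sin_neg]; ring
  have h5 : (2 * |u|) ^ 2 ≤ Real.sin (Real.pi * |u|) ^ 2 := by
    have : (0:ℝ) ≤ 2 * |u| := by positivity
    nlinarith
  rw [h1, h2]
  nlinarith [h5, h4, sq_abs u]

lemma exp_conj_mul_aux (s t : ℝ) :
    Complex.exp (2 * Real.pi * Complex.I * (s : ℂ)) *
      (starRingEnd ℂ) (Complex.exp (2 * Real.pi * Complex.I * (t : ℂ)))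
    = Complex.exp (((2 * Real.pi * (s - t) : ℝ) : ℂ) * Complex.I) := by
  rw [← Complex.exp_conj, ← Complex.exp_add]
  congr 1
  simp only [map_mul, Complex.conj_I, Complex.conj_ofReal, map_ofNat]
  push_cast
  ring

lemma charFn_eq_cos (ν : Measure ℂ) [IsProbabilityMeasure ν] (w : ℂ) :
    charFn ν w = ∫ p : ℂ × ℂ, Real.cos (2 * Real.pi * ((w * (p.1 - p.2)).re))
      ∂(ν.prod ν) := by
  classical
  have hgc : Continuous fun x : ℂ => Complex.exp (2 * Real.pi * Complex.I * ((x * w).re : ℂ)) := by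
    apply Complex.continuous_exp.comp
    fun_prop
  have hFc : Continuous fun p : ℂ × ℂ =>
      Complex.exp (((2 * Real.pi * ((w * (p.1 - p.2)).re) : ℝ) : ℂ) * Complex.I) := by
    apply Complex.continuous_exp.comp
    fun_prop
  have hFint : Integrable (fun p : ℂ × ℂ =>
      Complex.exp (((2 * Real.pi * ((w * (p.1 - p.2)).re) : ℝ) : ℂ) * Complex.I)) (ν.prod ν) :=
    (integrable_const (1:ℝ)).mono' hFc.aestronglyMeasurable
      (Filter.Eventually.of_forall fun p =>
        (Complex.norm_exp_ofReal_mul_I _).le)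
  have hre : ∀ p : ℂ × ℂ, (w * (p.1 - p.2)).re = (p.1 * w).re - (p.2 * w).re := by
    intro p
    rw [mul_comm w]
    simp [sub_mul]
  have hsplit : ∀ p : ℂ × ℂ,
      Complex.exp (((2 * Real.pi * ((w * (p.1 - p.2)).re) : ℝ) : ℂ) * Complex.I)
      = Complex.exp (2 * Real.pi * Complex.I * (((p.1 * w).re : ℝ) : ℂ)) *
          (starRingEnd ℂ) (Complex.exp (2 * Real.pi * Complex.I * (((p.2 * w).re : ℝ) : ℂ))) := by
    intro p
    rw [exp_conj_mul_aux, hre p]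
  have h1 : charFn ν w =
      ((∫ x, Complex.exp (2 * Real.pi * Complex.I * ((x * w).re : ℂ)) ∂ν) *
        (starRingEnd ℂ)
          (∫ x, Complex.exp (2 * Real.pi * Complex.I * ((x * w).re : ℂ)) ∂ν)).re := by
    rw [charFn, Complex.mul_conj, Complex.ofReal_re, Complex.sq_norm]
  have h2 : (∫ x, Complex.exp (2 * Real.pi * Complex.I * ((x * w).re : ℂ)) ∂ν) *
        (starRingEnd ℂ)
          (∫ x, Complex.exp (2 * Real.pi * Complex.I * ((x * w).re : ℂ)) ∂ν)
      = ∫ p : ℂ × ℂ,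
          Complex.exp (((2 * Real.pi * ((w * (p.1 - p.2)).re) : ℝ) : ℂ) * Complex.I)
          ∂(ν.prod ν) := by
    rw [← integral_conj, ← integral_prod_mul]
    exact integral_congr_ae (Filter.Eventually.of_forall fun p => (hsplit p).symm)
  have h3 := integral_re hFint
  simp only [RCLike.re_to_complex] at h3
  rw [h1, h2, ← h3]
  refine integral_congr_ae (Filter.Eventually.of_forall fun p => ?_)
  exact Complex.exp_ofReal_mul_I_re _

end AuxLemmas

/-- **Relationship between the characteristic function `f` and the `α`-norm**
(Lemma 5.2). -/
theorem charFn_le_exp_alphaNorm :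
    ∃ c : ℝ, 0 < c ∧
      ∀ (Ω : Type) [MeasureSpace Ω], IsProbabilityMeasure (ℙ : Measure Ω) →
      ∀ α : Ω → ℂ, Measurable α →
      ∀ w : ℂ, ∀ μ : ℝ, 0 < μ → μ ≤ 1 →
        (1 - μ / 2) + μ / 2 * charFn (Measure.map α ℙ) w
            ≤ Real.exp (-(c * μ * alphaNorm (Measure.map α ℙ) w ^ 2)) ∧
        charFn (Measure.map α ℙ) w ≤ 1 - c * alphaNorm (Measure.map α ℙ) w ^ 2 := by
  refine ⟨1, one_pos, ?_⟩
  intro Ω _ hprob α hα w μ hμ0 hμ1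
  haveI := hprob
  set ν := Measure.map α ℙ with hν
  haveI : IsProbabilityMeasure ν := Measure.isProbabilityMeasure_map hα.aemeasurable
  set A := ∫ p : ℂ × ℂ,
      |(w * (p.1 - p.2)).re - (round ((w * (p.1 - p.2)).re) : ℝ)| ^ 2 ∂(ν.prod ν) with hA
  have hA0 : 0 ≤ A := integral_nonneg fun p => by positivity
  have hnorm : alphaNorm ν w ^ 2 = A := by
    unfold alphaNorm
    rw [← hA]
    exact Real.sq_sqrt hA0
  have hc : Continuous fun p : ℂ × ℂ => (w * (p.1 - p.2)).re := by fun_prop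
  have hround : Measurable fun x : ℝ => ((round x : ℤ) : ℝ) := by
    simp_rw [round_eq]
    exact measurable_from_top.comp ((measurable_id.add_const _).floor)
  have hmeas : Measurable fun p : ℂ × ℂ =>
      |(w * (p.1 - p.2)).re - (round ((w * (p.1 - p.2)).re) : ℝ)| ^ 2 :=
    ((hc.measurable.sub (hround.comp hc.measurable)).abs).pow_const 2
  have hint1 : Integrable (fun p : ℂ × ℂ =>
      |(w * (p.1 - p.2)).re - (round ((w * (p.1 - p.2)).re) : ℝ)| ^ 2) (ν.prod ν) := by
    refine (integrable_const ((1:ℝ)/4)).mono' hmeas.aestronglyMeasurable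
      (Filter.Eventually.of_forall fun p => ?_)
    have h := abs_sub_round ((w * (p.1 - p.2)).re)
    rw [Real.norm_eq_abs, abs_of_nonneg (by positivity)]
    nlinarith [abs_nonneg ((w * (p.1 - p.2)).re - (round ((w * (p.1 - p.2)).re) : ℝ))]
  have hint2 : Integrable (fun p : ℂ × ℂ =>
      Real.cos (2 * Real.pi * ((w * (p.1 - p.2)).re))) (ν.prod ν) := by
    refine (integrable_const (1:ℝ)).mono'
      ((Real.continuous_cos.comp (by fun_prop : Continuous fun p : ℂ × ℂ =>
        2 * Real.pi * ((w * (p.1 - p.2)).re))).aestronglyMeasurable)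
      (Filter.Eventually.of_forall fun p => ?_)
    rw [Real.norm_eq_abs]
    exact Real.abs_cos_le_one _
  have key : charFn ν w ≤ 1 - 8 * A := by
    rw [charFn_eq_cos]
    calc ∫ p : ℂ × ℂ, Real.cos (2 * Real.pi * ((w * (p.1 - p.2)).re)) ∂(ν.prod ν)
        ≤ ∫ p : ℂ × ℂ, (1 - 8 *
            |(w * (p.1 - p.2)).re - (round ((w * (p.1 - p.2)).re) : ℝ)| ^ 2) ∂(ν.prod ν) := by
          refine integral_mono hint2 ((integrable_const (1:ℝ)).sub (hint1.const_mul 8))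
            fun p => ?_
          exact cos_le_one_sub_aux _
      _ = 1 - 8 * A := by
          rw [integral_sub (integrable_const 1) (hint1.const_mul 8), integral_const,
            integral_const_mul, ← hA]
          simp
  constructor
  · rw [hnorm]
    have hexp := Real.add_one_le_exp (-(1 * μ * A))
    have hmul : μ / 2 * charFn ν w ≤ μ / 2 * (1 - 8 * A) :=
      mul_le_mul_of_nonneg_left key (by linarith)
    nlinarith [hA0, hμ0.le]
  · rw [hnorm]
    nlinarith [hA0]
end

section
/- Let κ ≥ 1 and let α be a complex random variable with κ-controlled second moment. Then there exist constants c > 0 and c' > 0, depending only on κ, such that ‖z‖_α ≥ c'·|Re(z)| for all z ∈ ℂ with |z| ≤ c. -/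
open MeasureTheory ProbabilityTheory Filter

lemma measurable_roundR : Measurable (fun x : ℝ => (round x : ℝ)) := by
  have : (fun x : ℝ => (round x : ℝ)) = fun x => ((⌊x + 1/2⌋ : ℤ) : ℝ) := by
    funext x; rw [round_eq]
  rw [this]
  exact Measurable.comp (g := fun n : ℤ => (n : ℝ)) measurable_from_top
    (measurable_id.add_const _).floor

private theorem alphaNorm_core (κ : ℝ) (hκ : 1 ≤ κ)
    (Ω : Type) [MeasureSpace Ω] (hP : IsProbabilityMeasure (ℙ : Measure Ω))
    (α : Ω → ℂ) (hα : Measurable α)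
    (hmom : ∀ z w : ℂ, z.re ^ 2 / κ ≤ ∫ ω in {ω | ‖α ω‖ ≤ κ}, ((z * α ω - w).re) ^ 2)
    (z : ℂ) (hz : ‖z‖ ≤ 1/(5*κ)) :
    z.re ^ 2 / κ ^ 4 ≤ ∫ p : ℂ × ℂ,
      |(z * (p.1 - p.2)).re - (round ((z * (p.1 - p.2)).re) : ℝ)| ^ 2
      ∂((Measure.map α ℙ).prod (Measure.map α ℙ)) := by
  have hκ0 : (0:ℝ) < κ := lt_of_lt_of_le one_pos hκ
  set ν := Measure.map α ℙ with hνdef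
  haveI : IsProbabilityMeasure ν := Measure.isProbabilityMeasure_map hα.aemeasurable
  set s : Set ℂ := {a | ‖a‖ ≤ κ} with hsdef
  have hsm : MeasurableSet s := by
    have : s = norm ⁻¹' Set.Iic κ := rfl
    rw [this]; exact measurable_norm measurableSet_Iic
  -- transfer the control hypothesis to ν
  have hctrlν : ∀ z' w : ℂ, z'.re ^ 2 / κ ≤ ∫ a in s, ((z' * a - w).re) ^ 2 ∂ν := by
    intro z' w
    have hmeas : Measurable fun a : ℂ => ((z' * a - w).re) ^ 2 := by fun_prop
    rw [hνdef, setIntegral_map hsm hmeas.aestronglyMeasurable hα.aemeasurable]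
    exact hmom z' w
  -- measure of s is at least 1/κ^3
  have hνs : 1 / κ ^ 3 ≤ (ν s).toReal := by
    have h1 : 1 / κ ≤ ∫ a in s, (a.re) ^ 2 ∂ν := by
      have := hctrlν 1 0
      simpa using this
    have hint : IntegrableOn (fun a : ℂ => (a.re) ^ 2) s ν := by
      refine Measure.integrableOn_of_bounded (M := κ ^ 2) (measure_ne_top _ _)
        (Complex.measurable_re.pow_const 2).aestronglyMeasurable ?_
      filter_upwards [ae_restrict_mem hsm] with a ha
      have h2 : |a.re| ≤ κ := le_trans (Complex.abs_re_le_norm a) ha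
      rw [Real.norm_eq_abs, abs_pow]
      nlinarith [abs_nonneg a.re]
    have h2 : ∫ a in s, (a.re) ^ 2 ∂ν ≤ ∫ _ in s, κ ^ 2 ∂ν := by
      refine setIntegral_mono_on hint (integrableOn_const (measure_ne_top _ _))
        hsm fun a ha => ?_
      have h2 : |a.re| ≤ κ := le_trans (Complex.abs_re_le_norm a) ha
      nlinarith [abs_nonneg a.re, le_abs_self a.re, neg_abs_le a.re]
    rw [setIntegral_const, smul_eq_mul] at h2
    have h3 : 1 / κ ≤ (ν s).toReal * κ ^ 2 := le_trans h1 h2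
    rw [div_le_iff₀ (by positivity)] at *
    nlinarith [ENNReal.toReal_nonneg (a := ν s)]
  -- the indicator function
  set φ : ℂ × ℂ → ℝ := (s ×ˢ s).indicator (fun p => ((z * (p.1 - p.2)).re) ^ 2) with hφdef
  have hφmeas : Measurable φ := by
    refine Measurable.indicator ?_ (hsm.prod hsm)
    fun_prop
  have hφbdd : ∀ p, ‖φ p‖ ≤ 1 := by
    intro p
    rw [hφdef, Set.indicator]
    split_ifs with hp
    · obtain ⟨hp1, hp2⟩ := hp
      have h1 : ‖p.1 - p.2‖ ≤ 2 * κ := by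
        calc ‖p.1 - p.2‖ ≤ ‖p.1‖ + ‖p.2‖ := norm_sub_le _ _
          _ ≤ 2 * κ := by have := hp1; have := hp2; simp only [hsdef, Set.mem_setOf_eq] at *; linarith
      have h2 : |(z * (p.1 - p.2)).re| ≤ ‖z * (p.1 - p.2)‖ := Complex.abs_re_le_norm _
      have h3 : ‖z * (p.1 - p.2)‖ ≤ (1/(5*κ)) * (2*κ) := by
        rw [norm_mul]
        exact mul_le_mul hz h1 (norm_nonneg _) (by positivity)
      have h4 : (1/(5*κ)) * (2*κ) = 2/5 := by field_simp
      have h5 : |(z * (p.1 - p.2)).re| ≤ 2/5 := by rw [h4] at h3; linarith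
      rw [Real.norm_eq_abs, abs_pow]
      nlinarith [abs_nonneg ((z * (p.1 - p.2)).re)]
    · simp
  have hφint : Integrable φ (ν.prod ν) :=
    ⟨hφmeas.aestronglyMeasurable, HasFiniteIntegral.of_bounded (ae_of_all _ hφbdd)⟩
  -- the target integrand
  set F : ℂ × ℂ → ℝ :=
    fun p => |(z * (p.1 - p.2)).re - (round ((z * (p.1 - p.2)).re) : ℝ)| ^ 2 with hFdef
  have hFmeas : Measurable F := by
    have h0 : Measurable fun p : ℂ × ℂ => (z * (p.1 - p.2)).re := by fun_prop
    exact ((h0.sub (measurable_roundR.comp h0)).abs).pow_const 2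
  have hFint : Integrable F (ν.prod ν) := by
    refine ⟨hFmeas.aestronglyMeasurable, HasFiniteIntegral.of_bounded (C := 1) (ae_of_all _ ?_)⟩
    intro p
    have h1 := abs_sub_round ((z * (p.1 - p.2)).re)
    simp only [hFdef, Real.norm_eq_abs, abs_pow, abs_abs]
    nlinarith [abs_nonneg ((z * (p.1 - p.2)).re - (round ((z * (p.1 - p.2)).re) : ℝ))]
  -- pointwise: φ ≤ F
  have hφF : ∀ p, φ p ≤ F p := by
    intro p
    rw [hφdef, Set.indicator]
    split_ifs with hp
    · obtain ⟨hp1, hp2⟩ := hp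
      have h1 : ‖p.1 - p.2‖ ≤ 2 * κ := by
        calc ‖p.1 - p.2‖ ≤ ‖p.1‖ + ‖p.2‖ := norm_sub_le _ _
          _ ≤ 2 * κ := by have := hp1; have := hp2; simp only [hsdef, Set.mem_setOf_eq] at *; linarith
      have h2 : |(z * (p.1 - p.2)).re| ≤ ‖z * (p.1 - p.2)‖ := Complex.abs_re_le_norm _
      have h3 : ‖z * (p.1 - p.2)‖ ≤ (1/(5*κ)) * (2*κ) := by
        rw [norm_mul]
        exact mul_le_mul hz h1 (norm_nonneg _) (by positivity)
      have h4 : (1/(5*κ)) * (2*κ) = 2/5 := by field_simp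
      have h5 : |(z * (p.1 - p.2)).re| ≤ 2/5 := by rw [h4] at h3; linarith
      have hr : round ((z * (p.1 - p.2)).re) = 0 := by
        rw [round_eq_zero_iff]
        constructor
        · have := neg_abs_le ((z * (p.1 - p.2)).re); linarith
        · have := le_abs_self ((z * (p.1 - p.2)).re); linarith
      rw [hFdef]
      simp only [hr, Int.cast_zero, sub_zero, sq_abs, le_refl]
    · exact le_trans (le_refl 0) (by positivity)
  have hmain : ∫ p, φ p ∂(ν.prod ν) ≤ ∫ p, F p ∂(ν.prod ν) :=
    integral_mono hφint hFint hφF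
  -- Fubini for φ
  have hfub : ∫ p, φ p ∂(ν.prod ν) = ∫ x, ∫ y, φ (x, y) ∂ν ∂ν := integral_prod _ hφint
  -- inner bound
  have hinner : ∀ x : ℂ, s.indicator (fun _ => z.re ^ 2 / κ) x ≤ ∫ y, φ (x, y) ∂ν := by
    intro x
    by_cases hx : x ∈ s
    · have hrewrite : (fun y => φ (x, y)) = s.indicator (fun y => ((z * y - z * x).re) ^ 2) := by
        funext y
        rw [hφdef]
        by_cases hy : y ∈ s
        · rw [Set.indicator_of_mem (Set.mk_mem_prod hx hy), Set.indicator_of_mem hy]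
          have : z * (x - y) = -(z * y - z * x) := by ring
          rw [this, Complex.neg_re]
          ring
        · rw [Set.indicator_of_notMem (fun hc => hy hc.2), Set.indicator_of_notMem hy]
      rw [Set.indicator_of_mem hx, hrewrite, integral_indicator hsm]
      exact hctrlν z (z * x)
    · rw [Set.indicator_of_notMem hx]
      have hz0 : (fun y => φ (x, y)) = fun _ => (0:ℝ) := by
        funext y
        rw [hφdef, Set.indicator_of_notMem (fun hc => hx hc.1)]
      rw [hz0, integral_const, smul_zero]
  have houter : ∫ x, s.indicator (fun _ => z.re ^ 2 / κ) x ∂ν ≤ ∫ x, ∫ y, φ (x, y) ∂ν ∂ν := by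
    refine integral_mono ?_ hφint.integral_prod_left hinner
    exact (integrable_indicator_iff hsm).2 (integrableOn_const (measure_ne_top _ _))
  have hconst : ∫ x, s.indicator (fun _ => z.re ^ 2 / κ) x ∂ν = (ν s).toReal * (z.re ^ 2 / κ) := by
    rw [integral_indicator_const _ hsm, smul_eq_mul]
    rfl
  have hfinal : z.re ^ 2 / κ ^ 4 ≤ (ν s).toReal * (z.re ^ 2 / κ) := by
    have h1 : z.re ^ 2 / κ ^ 4 = (1 / κ ^ 3) * (z.re ^ 2 / κ) := by
      rw [div_mul_div_comm, one_mul, ← pow_succ]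
    rw [h1]
    exact mul_le_mul_of_nonneg_right hνs (by positivity)
  calc z.re ^ 2 / κ ^ 4 ≤ (ν s).toReal * (z.re ^ 2 / κ) := hfinal
    _ = ∫ x, s.indicator (fun _ => z.re ^ 2 / κ) x ∂ν := hconst.symm
    _ ≤ ∫ x, ∫ y, φ (x, y) ∂ν ∂ν := houter
    _ = ∫ p, φ p ∂(ν.prod ν) := hfub.symm
    _ ≤ ∫ p, F p ∂(ν.prod ν) := hmain

/-- **Lower bound on the `α`-norm near the origin** (Lemma 5.3 (iii)). -/
theorem alphaNorm_lower_bound (κ : ℝ) (hκ : 1 ≤ κ) :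
    ∃ c c' : ℝ, 0 < c ∧ 0 < c' ∧
      ∀ (Ω : Type) [MeasureSpace Ω], IsProbabilityMeasure (ℙ : Measure Ω) →
      ∀ α : Ω → ℂ, Measurable α → HasControlledSecondMoment α κ →
      ∀ z : ℂ, ‖z‖ ≤ c → c' * |z.re| ≤ alphaNorm (Measure.map α ℙ) z := by
  refine ⟨1 / (5 * κ), 1 / κ ^ 2, by positivity, by positivity, ?_⟩
  intro Ω _ hP α hα hctrl z hz
  have hκ0 : (0:ℝ) < κ := lt_of_lt_of_le one_pos hκ
  obtain ⟨-, -, -, hmom⟩ := hctrl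
  have hcore := alphaNorm_core κ hκ Ω hP α hα hmom z hz
  rw [alphaNorm]
  refine Real.le_sqrt_of_sq_le (le_trans (le_of_eq ?_) hcore)
  rw [mul_pow, div_pow, sq_abs, one_pow, ← pow_mul]
  norm_num
  rw [inv_mul_eq_div]
end
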